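/- arXiv:0811.1093 — 6 statements merged into one kernel-verified Lean document; each statement's English description precedes it below -/
import Mathlib

section
/- If a bounded holomorphic function f on the right half-plane H = {z : Re z > 0} satisfies limsup_{Re z → ∞} |f(z)| e^{λ Re z} < ∞ for some λ > 0, and M is the supremum over y ∈ ℝ of the non-tangential boundary values |f*(iy)|, then |f(z)| ≤ M e^{-λ Re z} for all z in H. -/
open Filter Complex Metric

lemma aux_diff (a u w : ℂ) (hu : u ≠ 1) (hw : w ≠ 1) :
    (a + (starRingEnd ℂ) a * u) / (1 - u) - (a + (starRingEnd ℂ) a * w) / (1 - w)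
      = (a + (starRingEnd ℂ) a) * (u - w) / ((1 - u) * (1 - w)) := by
  have h1 : (1:ℂ) - u ≠ 0 := sub_ne_zero.mpr (Ne.symm hu)
  have h2 : (1:ℂ) - w ≠ 0 := sub_ne_zero.mpr (Ne.symm hw)
  field_simp
  ring

lemma aux_re (a w : ℂ) (hw : w ≠ 1) :
    ((a + (starRingEnd ℂ) a * w) / (1 - w)).re * Complex.normSq (1 - w) =
      a.re * (1 - Complex.normSq w) := by
  have h1 : (1:ℂ) - w ≠ 0 := sub_ne_zero.mpr (Ne.symm hw)
  have h2 : (starRingEnd ℂ) (1 - w) ≠ 0 := by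
    simpa using (map_ne_zero (starRingEnd ℂ)).mpr h1
  have key : (((a + (starRingEnd ℂ) a * w) / (1 - w))
        + (starRingEnd ℂ) ((a + (starRingEnd ℂ) a * w) / (1 - w))) * ((1 - w) * (starRingEnd ℂ) (1 - w))
      = (a + (starRingEnd ℂ) a) * (1 - w * (starRingEnd ℂ) w) := by
    have h3 : (1:ℂ) - (starRingEnd ℂ) w ≠ 0 := by
      intro h
      apply hw
      have : (starRingEnd ℂ) w = 1 := by linear_combination -h
      calc w = (starRingEnd ℂ) ((starRingEnd ℂ) w) := (Complex.conj_conj w).symm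
        _ = 1 := by rw [this]; simp
    simp only [map_div₀, map_add, map_mul, map_sub, map_one, Complex.conj_conj]
    field_simp
    ring
  rw [Complex.add_conj, Complex.mul_conj, Complex.add_conj, Complex.mul_conj] at key
  have key2 : ((2 * ((a + (starRingEnd ℂ) a * w) / (1 - w)).re * Complex.normSq (1 - w) : ℝ) : ℂ)
      = ((2 * (a.re * (1 - Complex.normSq w)) : ℝ) : ℂ) := by
    push_cast at key ⊢
    linear_combination key
  have := Complex.ofReal_inj.mp key2
  linarith

lemma aux_mean {g : ℂ → ℂ} {ρ : ℝ} (hρ : 0 < ρ) (hρ1 : ρ < 1)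
    (hg : DifferentiableOn ℂ g (Metric.ball (0:ℂ) 1)) :
    ‖g 0‖ ≤ (2 * Real.pi)⁻¹ * ∫ θ in (0:ℝ)..(2 * Real.pi),
      ‖g (circleMap 0 ρ θ)‖ := by
  have hπ : (0:ℝ) < 2 * Real.pi := by positivity
  have hdc : DiffContOnCl ℂ g (Metric.ball (0:ℂ) ρ) :=
    ⟨hg.mono (Metric.ball_subset_ball hρ1.le),
      hg.continuousOn.mono (closure_ball_subset_closedBall.trans (Metric.closedBall_subset_ball hρ1))⟩
  have hc := hdc.circleIntegral_sub_inv_smul (Metric.mem_ball_self hρ)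
  rw [circleIntegral] at hc
  simp only [deriv_circleMap, sub_zero, smul_eq_mul] at hc
  have hne : ∀ θ : ℝ, circleMap 0 ρ θ ≠ 0 := fun θ => circleMap_ne_center hρ.ne'
  have heq : (∫ θ in (0:ℝ)..(2*Real.pi),
        circleMap 0 ρ θ * Complex.I * ((circleMap 0 ρ θ)⁻¹ * g (circleMap 0 ρ θ)))
      = ∫ θ in (0:ℝ)..(2*Real.pi), Complex.I * g (circleMap 0 ρ θ) := by
    refine intervalIntegral.integral_congr fun θ _ => ?_
    field_simp [hne θ]
  rw [heq, intervalIntegral.integral_const_mul] at hc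
  have hint : (∫ θ in (0:ℝ)..(2*Real.pi), g (circleMap 0 ρ θ)) = ((2*Real.pi : ℝ) : ℂ) * g 0 := by
    refine mul_left_cancel₀ Complex.I_ne_zero (hc.trans ?_)
    push_cast
    ring
  have hnorm : ‖∫ θ in (0:ℝ)..(2*Real.pi), g (circleMap 0 ρ θ)‖
      ≤ ∫ θ in (0:ℝ)..(2*Real.pi), ‖g (circleMap 0 ρ θ)‖ :=
    intervalIntegral.norm_integral_le_integral_norm hπ.le
  rw [hint] at hnorm
  have hL : ‖((2*Real.pi : ℝ) : ℂ) * g 0‖ = (2*Real.pi) * ‖g 0‖ := by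
    rw [norm_mul, Complex.norm_real, Real.norm_eq_abs, abs_of_pos hπ]
  rw [hL] at hnorm
  have : (2*Real.pi) * ‖g 0‖ ≤ ∫ θ in (0:ℝ)..(2*Real.pi), ‖g (circleMap 0 ρ θ)‖ := by
    simpa using hnorm
  calc ‖g 0‖ = (2*Real.pi)⁻¹ * ((2*Real.pi) * ‖g 0‖) := by
        field_simp
    _ ≤ _ := by
        apply mul_le_mul_of_nonneg_left this (by positivity)

/-- **Phragmén–Lindelöf type maximum principle on the right half-plane.**
If a bounded holomorphic function `f` on `H = {Re z > 0}` satisfies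
`limsup_{Re z → ∞} |f(z)| e^{λ Re z} < ∞` for some `λ > 0`, and `fstar y` denotes the
non-tangential boundary value of `f` at `i y`, then `|f z| ≤ (⨆ y, |fstar y|) e^{-λ Re z}`
on `H`. -/
theorem stmt_0 (f : ℂ → ℂ) (lam : ℝ) (fstar : ℝ → ℂ)
    (hf : DifferentiableOn ℂ f {z : ℂ | 0 < z.re})
    (hbdd : ∃ C : ℝ, ∀ z : ℂ, 0 < z.re → ‖f z‖ ≤ C)
    (hlam : 0 < lam)
    (hlimsup : ∃ C : ℝ, ∀ᶠ z : ℂ in Filter.comap Complex.re Filter.atTop,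
      ‖f z‖ * Real.exp (lam * z.re) ≤ C)
    (hstar : ∀ y : ℝ, ∀ κ : ℝ, 1 < κ →
      Filter.Tendsto f
        (nhdsWithin ((y : ℂ) * Complex.I)
          {z : ℂ | 0 < z.re ∧ ‖z - (y : ℂ) * Complex.I‖ < κ * z.re})
        (nhds (fstar y))) :
    ∀ z : ℂ, 0 < z.re →
      ‖f z‖ ≤ (⨆ y : ℝ, ‖fstar y‖) * Real.exp (-lam * z.re) := by
  obtain ⟨C₀, hC₀⟩ := hbdd
  obtain ⟨C₁, hC₁⟩ := hlimsup
  have hopenH : IsOpen {z : ℂ | 0 < z.re} := isOpen_lt continuous_const continuous_re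
  -- uniform bound B for |f z| * exp (lam * z.re) on H
  rw [Filter.eventually_comap] at hC₁
  rw [Filter.eventually_atTop] at hC₁
  obtain ⟨R, hR⟩ := hC₁
  set B : ℝ := max C₁ (C₀ * Real.exp (lam * max R 0)) with hBdef
  have hB : ∀ z : ℂ, 0 < z.re → ‖f z‖ * Real.exp (lam * z.re) ≤ B := by
    intro z hz
    rcases le_or_gt (max R 0) z.re with h | h
    · exact le_trans (hR z.re (le_trans (le_max_left _ _) h) z rfl) (le_max_left _ _)
    · refine le_trans ?_ (le_max_right _ _)
      have h0 : (0:ℝ) ≤ C₀ := le_trans (norm_nonneg _) (hC₀ z hz)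
      exact mul_le_mul (hC₀ z hz) (Real.exp_le_exp.mpr (by nlinarith [h.le])) (Real.exp_pos _).le h0
  -- each |fstar y| is at most C₀, hence at most M
  have hfsb : ∀ y : ℝ, ‖fstar y‖ ≤ C₀ := by
    intro y
    set S : Set ℂ := {z : ℂ | 0 < z.re ∧ ‖z - (y : ℂ) * Complex.I‖ < 2 * z.re} with hS
    have htend : Filter.Tendsto (fun t : ℝ => (t : ℂ) + (y : ℂ) * Complex.I)
        (nhdsWithin 0 (Set.Ioi 0)) (nhdsWithin ((y:ℂ) * Complex.I) S) := by
      rw [tendsto_nhdsWithin_iff]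
      constructor
      · have : Filter.Tendsto (fun t : ℝ => (t : ℂ) + (y : ℂ) * Complex.I) (nhds 0)
            (nhds (((0:ℝ):ℂ) + (y:ℂ) * Complex.I)) :=
          ((Complex.continuous_ofReal.add continuous_const).tendsto 0)
        simpa using this.mono_left nhdsWithin_le_nhds
      · filter_upwards [eventually_mem_nhdsWithin] with t ht
        have ht' : (0:ℝ) < t := ht
        constructor
        · simp [ht']
        · have : ((t:ℂ) + (y:ℂ)*Complex.I - (y:ℂ)*Complex.I) = (t:ℂ) := by ring
          rw [this]
          simp only [Complex.norm_real, Real.norm_eq_abs, abs_of_pos ht']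
          have : ((t:ℂ) + (y:ℂ)*Complex.I).re = t := by simp
          rw [this]
          linarith
    haveI : (nhdsWithin ((y:ℂ) * Complex.I) S).NeBot := htend.neBot
    refine le_of_tendsto ((continuous_norm.tendsto _).comp (hstar y 2 one_lt_two)) ?_
    filter_upwards [eventually_mem_nhdsWithin] with z hz
    exact hC₀ z hz.1
  have hbdda : BddAbove (Set.range fun y : ℝ => ‖fstar y‖) :=
    ⟨C₀, by rintro x ⟨y, rfl⟩; exact hfsb y⟩
  set M : ℝ := ⨆ y : ℝ, ‖fstar y‖ with hMdef
  have hM : ∀ y : ℝ, ‖fstar y‖ ≤ M := fun y => le_ciSup hbdda y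
  have hM0 : 0 ≤ M := le_trans (norm_nonneg _) (hM 0)
  -- main argument
  intro z₀ hz₀
  set φ : ℂ → ℂ := fun w => (z₀ + (starRingEnd ℂ) z₀ * w) / (1 - w) with hφdef
  have hφre : ∀ w : ℂ, w ≠ 1 → (φ w).re * Complex.normSq (1 - w)
      = z₀.re * (1 - Complex.normSq w) := fun w hw => aux_re z₀ w hw
  have hφH : ∀ w : ℂ, ‖w‖ < 1 → 0 < (φ w).re := by
    intro w hw
    have hw1 : w ≠ 1 := by
      intro h; rw [h] at hw; simp at hw
    have h1 : (0:ℝ) < Complex.normSq (1 - w) :=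
      Complex.normSq_pos.mpr (sub_ne_zero.mpr (Ne.symm hw1))
    have h2 : Complex.normSq w < 1 := by
      rw [← Complex.sq_norm]
      nlinarith [norm_nonneg w]
    nlinarith [hφre w hw1]
  have hφd : ∀ w : ℂ, ‖w‖ < 1 → DifferentiableAt ℂ φ w := by
    intro w hw
    apply DifferentiableAt.div (by fun_prop) (by fun_prop)
    intro h
    have : w = 1 := by linear_combination -h
    rw [this] at hw; simp at hw
  set g : ℂ → ℂ := fun w => f (φ w) * Complex.exp ((lam : ℂ) * φ w) with hgdef
  have hgd : ∀ w ∈ Metric.ball (0:ℂ) 1, DifferentiableAt ℂ g w := by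
    intro w hw
    rw [Metric.mem_ball, dist_zero_right] at hw
    have h1 : DifferentiableAt ℂ f (φ w) :=
      hf.differentiableAt (hopenH.mem_nhds (hφH w hw))
    exact ((h1.comp w (hφd w hw)).mul
      ((Complex.differentiable_exp _).comp w ((differentiableAt_const _).mul (hφd w hw))))
  have hgB : ∀ w : ℂ, ‖w‖ < 1 → ‖g w‖ ≤ B := by
    intro w hw
    have : ‖g w‖ = ‖f (φ w)‖ * Real.exp (lam * (φ w).re) := by
      rw [hgdef]
      simp only [norm_mul, Complex.norm_exp]
      congr 2
      simp [Complex.mul_re]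
    rw [this]
    exact hB (φ w) (hφH w hw)
  -- the candidate boundary function
  set v : ℝ → ℝ := fun θ => ‖fstar ((φ (Complex.exp ((θ:ℂ) * Complex.I))).im)‖ with hvdef
  set l : Filter ℝ := nhdsWithin 1 (Set.Ioo (0:ℝ) 1) with hldef
  haveI hlne : l.NeBot := by
    rw [hldef]
    refine mem_closure_iff_nhdsWithin_neBot.mp ?_
    rw [closure_Ioo one_ne_zero.symm]
    exact Set.right_mem_Icc.mpr zero_le_one
  -- pointwise convergence for a.e. θ
  have hptwise : ∀ θ : ℝ, θ ∈ Set.Ioo 0 (2*Real.pi) →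
      Filter.Tendsto (fun ρ : ℝ => ‖g (circleMap 0 ρ θ)‖) l (nhds (v θ)) := by
    intro θ hθ
    set w₀ : ℂ := Complex.exp ((θ:ℂ) * Complex.I) with hw₀def
    have habs1 : ‖w₀‖ = 1 := by
      rw [hw₀def, Complex.norm_exp]
      simp
    have hw₀1 : w₀ ≠ 1 := by
      intro h
      rw [hw₀def, Complex.exp_eq_one_iff] at h
      obtain ⟨n, hn⟩ := h
      have him := congrArg Complex.im hn
      simp at him
      rcases hθ with ⟨h1, h2⟩
      rw [him] at h1 h2
      have hn0 : (0:ℝ) < (n:ℝ) := by nlinarith [Real.pi_pos]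
      have hn1 : (1:ℝ) ≤ (n:ℝ) := by exact_mod_cast (by exact_mod_cast hn0 : (0:ℤ) < n)
      nlinarith [Real.pi_pos]
    have hd : 0 < ‖1 - w₀‖ := by
      rw [norm_pos_iff]
      exact sub_ne_zero.mpr (Ne.symm hw₀1)
    set d : ℝ := ‖1 - w₀‖ with hddef
    set ζ : ℂ := φ w₀ with hζdef
    have hnsq : Complex.normSq w₀ = 1 := by rw [← Complex.sq_norm, habs1]; norm_num
    have hζre : ζ.re = 0 := by
      have h := hφre w₀ hw₀1
      rw [hnsq, sub_self, mul_zero, mul_eq_zero] at h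
      rcases h with h | h
      · exact h
      · exact absurd h (Complex.normSq_pos.mpr (sub_ne_zero.mpr (Ne.symm hw₀1))).ne'
    set y : ℝ := ζ.im with hydef
    have hζeq : (y:ℂ) * Complex.I = ζ := by
      apply Complex.ext <;> simp [hζre, hydef]
    have hu1 : ∀ ρ : ℝ, ρ ∈ Set.Ioo (0:ℝ) 1 → ‖(ρ:ℂ) * w₀‖ < 1 := by
      intro ρ hρ
      rw [norm_mul, habs1, Complex.norm_real, Real.norm_eq_abs, abs_of_pos hρ.1, mul_one]
      exact hρ.2
    have hune : ∀ ρ : ℝ, ρ ∈ Set.Ioo (0:ℝ) 1 → (ρ:ℂ) * w₀ ≠ 1 := by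
      intro ρ hρ h
      have h2 := congrArg (‖·‖) h
      rw [norm_mul, habs1, Complex.norm_real, Real.norm_eq_abs, abs_of_pos hρ.1, mul_one, norm_one] at h2
      exact hρ.2.ne h2
    have hcurve : Filter.Tendsto (fun ρ : ℝ => φ ((ρ:ℂ) * w₀)) (nhds 1) (nhds ζ) := by
      have hc : ContinuousAt
          (fun ρ : ℝ => (z₀ + (starRingEnd ℂ) z₀ * ((ρ:ℂ) * w₀)) / (1 - (ρ:ℂ) * w₀)) 1 := by
        apply ContinuousAt.div (by fun_prop) (by fun_prop)
        simp only [Complex.ofReal_one, one_mul]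
        exact sub_ne_zero.mpr (Ne.symm hw₀1)
      have h3 := hc.tendsto
      simp only [Complex.ofReal_one, one_mul] at h3
      exact h3
    have hmem : ∀ᶠ ρ : ℝ in l, φ ((ρ:ℂ) * w₀) ∈
        {z : ℂ | 0 < z.re ∧ ‖z - (y:ℂ)*Complex.I‖ < 2 * z.re} := by
      have hev1 : ∀ᶠ ρ : ℝ in nhds (1:ℝ), 1 - ρ < ρ * d := by
        have hop : IsOpen {ρ : ℝ | 1 - ρ < ρ * d} := isOpen_lt (by fun_prop) (by fun_prop)
        refine hop.mem_nhds ?_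
        simp only [Set.mem_setOf_eq, sub_self, one_mul]
        linarith
      rw [hldef]
      filter_upwards [eventually_nhdsWithin_of_eventually_nhds hev1,
        eventually_mem_nhdsWithin] with ρ hρd hρ
      set u : ℂ := (ρ:ℂ) * w₀ with hudef
      have hu : ‖u‖ < 1 := hu1 ρ hρ
      have hre : 0 < (φ u).re := hφH u hu
      refine ⟨hre, ?_⟩
      rw [hζeq]
      have hA : 0 < ‖1 - u‖ := by
        rw [norm_pos_iff]; exact sub_ne_zero.mpr (Ne.symm (hune ρ hρ))
      have hnsqu : Complex.normSq u = ρ^2 := by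
        rw [hudef, map_mul, hnsq, mul_one, Complex.normSq_ofReal, sq]
      have hreu : (φ u).re * Complex.normSq (1 - u) = z₀.re * (1 - ρ^2) := by
        rw [hφre u (hune ρ hρ), hnsqu]
      have hdiff : φ u - ζ = (z₀ + (starRingEnd ℂ) z₀) * (u - w₀) / ((1 - u) * (1 - w₀)) :=
        aux_diff z₀ u w₀ (hune ρ hρ) hw₀1
      have habsz : ‖z₀ + (starRingEnd ℂ) z₀‖ = 2 * z₀.re := by
        rw [Complex.add_conj, Complex.norm_real, Real.norm_eq_abs, abs_of_pos (by linarith)]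
      have habsu : ‖u - w₀‖ = 1 - ρ := by
        rw [show u - w₀ = ((ρ:ℂ) - 1) * w₀ by rw [hudef]; ring, norm_mul, habs1, mul_one]
        rw [show (ρ:ℂ) - 1 = ((ρ - 1 : ℝ) : ℂ) by push_cast; ring, Complex.norm_real, Real.norm_eq_abs]
        rw [abs_of_neg (by linarith [hρ.2])]
        ring
      have habsdiff : ‖φ u - ζ‖
          = 2 * z₀.re * (1 - ρ) / (‖1 - u‖ * d) := by
        rw [hdiff, norm_div, norm_mul, norm_mul, habsz, habsu, hddef]
      have hAd : ‖1 - u‖ < (1 + ρ) * d := by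
        have h5 : ‖1 - u‖ ≤ d + (1 - ρ) := by
          rw [show (1:ℂ) - u = (1 - w₀) + ((1:ℝ):ℂ) * w₀ - (ρ:ℂ) * w₀ by rw [hudef]; push_cast; ring]
          rw [show (1 - w₀) + ((1:ℝ):ℂ) * w₀ - (ρ:ℂ) * w₀ = (1 - w₀) + ((1 - ρ : ℝ):ℂ) * w₀ by push_cast; ring]
          refine le_trans (norm_add_le _ _) ?_
          rw [norm_mul, habs1, mul_one, Complex.norm_real, Real.norm_eq_abs, abs_of_pos (by linarith [hρ.2])]
        nlinarith [hρ.1, hρ.2, hρd]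
      rw [habsdiff, div_lt_iff₀ (by positivity)]
      have hre2 : (φ u).re * (‖1 - u‖)^2 = z₀.re * (1 - ρ^2) := by
        rw [Complex.sq_norm]; exact hreu
      have key := mul_lt_mul_of_pos_left hAd
        (by positivity : (0:ℝ) < 2 * (φ u).re * ‖1 - u‖)
      nlinarith [key, hre2, hρ.1, hρ.2, hre, hA, hd]
    have hfl : Filter.Tendsto (fun ρ : ℝ => f (φ ((ρ:ℂ) * w₀))) l (nhds (fstar y)) := by
      refine (hstar y 2 one_lt_two).comp ?_
      rw [tendsto_nhdsWithin_iff]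
      constructor
      · rw [hζeq]
        exact hcurve.mono_left nhdsWithin_le_nhds
      · exact hmem
    have hel : Filter.Tendsto (fun ρ : ℝ => Complex.exp ((lam:ℂ) * φ ((ρ:ℂ) * w₀))) l
        (nhds (Complex.exp ((lam:ℂ) * ζ))) := by
      have hc2 : Continuous (fun z : ℂ => Complex.exp ((lam:ℂ) * z)) := by fun_prop
      exact (hc2.tendsto ζ).comp (hcurve.mono_left nhdsWithin_le_nhds)
    have hcm : ∀ ρ : ℝ, circleMap 0 ρ θ = (ρ:ℂ) * w₀ := by
      intro ρ; rw [hw₀def]; simp [circleMap]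
    have hcomb : Filter.Tendsto (fun ρ : ℝ => g (circleMap 0 ρ θ)) l
        (nhds (fstar y * Complex.exp ((lam:ℂ) * ζ))) := by
      refine (hfl.mul hel).congr fun ρ => ?_
      rw [hgdef, hcm ρ]
    have habsval : ‖fstar y * Complex.exp ((lam:ℂ) * ζ)‖ = v θ := by
      rw [norm_mul, Complex.norm_exp]
      have hre0 : ((lam:ℂ) * ζ).re = 0 := by
        simp [Complex.mul_re, hζre]
      rw [hre0, Real.exp_zero, mul_one, hvdef]
    rw [← habsval]
    exact (continuous_norm.tendsto _).comp hcomb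
  -- measurability
  have hFmeas : ∀ ρ : ℝ, ρ ∈ Set.Ioo (0:ℝ) 1 →
      Continuous (fun θ : ℝ => ‖g (circleMap 0 ρ θ)‖) := by
    intro ρ hρ
    apply continuous_norm.comp
    apply continuous_iff_continuousAt.mpr
    intro θ
    have hmem : circleMap 0 ρ θ ∈ Metric.ball (0:ℂ) 1 := by
      rw [Metric.mem_ball, dist_zero_right]
      simp only [norm_circleMap_zero]
      rw [abs_of_pos hρ.1]; exact hρ.2
    exact (hgd _ hmem).continuousAt.comp (continuous_circleMap 0 ρ).continuousAt
  have hπ : (0:ℝ) < 2 * Real.pi := by positivity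
  have hae : ∀ᵐ θ : ℝ ∂MeasureTheory.volume, θ ∈ Set.uIoc (0:ℝ) (2*Real.pi) →
      Filter.Tendsto (fun ρ : ℝ => ‖g (circleMap 0 ρ θ)‖) l (nhds (v θ)) := by
    have hsing : ∀ᵐ θ : ℝ ∂MeasureTheory.volume, θ ≠ 2*Real.pi := by
      refine MeasureTheory.ae_iff.mpr ?_
      have : {a : ℝ | ¬a ≠ 2*Real.pi} = {2*Real.pi} := by ext a; simp
      rw [this]
      exact Real.volume_singleton
    filter_upwards [hsing] with θ hθ hθ'
    rw [Set.uIoc_of_le hπ.le] at hθ'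
    exact hptwise θ ⟨hθ'.1, lt_of_le_of_ne hθ'.2 hθ⟩
  -- dominated convergence
  have hDCT : Filter.Tendsto
      (fun ρ : ℝ => ∫ θ in (0:ℝ)..(2*Real.pi), ‖g (circleMap 0 ρ θ)‖)
      l (nhds (∫ θ in (0:ℝ)..(2*Real.pi), v θ)) := by
    refine intervalIntegral.tendsto_integral_filter_of_dominated_convergence
      (fun _ => B) ?_ ?_ intervalIntegrable_const ?_
    · filter_upwards [eventually_mem_nhdsWithin] with ρ hρ
      exact ((hFmeas ρ hρ).aestronglyMeasurable).restrict
    · filter_upwards [eventually_mem_nhdsWithin] with ρ hρ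
      refine MeasureTheory.ae_of_all _ fun θ _ => ?_
      rw [Real.norm_eq_abs, _root_.abs_of_nonneg (norm_nonneg _)]
      apply hgB
      rw [norm_circleMap_zero, abs_of_pos hρ.1]; exact hρ.2
    · exact hae
  -- integrability and bound for v
  have hseqmem : ∀ n : ℕ, (1 - 1/(n+2 : ℝ)) ∈ Set.Ioo (0:ℝ) 1 := by
    intro n
    have h2 : (0:ℝ) < 1/(n+2:ℝ) := by positivity
    have h3 : 1/(n+2:ℝ) ≤ 1/2 := by
      apply div_le_div_of_nonneg_left one_pos.le (by norm_num)
      have : (0:ℝ) ≤ (n:ℝ) := Nat.cast_nonneg n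
      linarith
    constructor <;> [linarith; linarith]
  have hseq : Filter.Tendsto (fun n : ℕ => 1 - 1/(n+2 : ℝ)) Filter.atTop l := by
    rw [hldef, tendsto_nhdsWithin_iff]
    constructor
    · have h1 : Filter.Tendsto (fun n : ℕ => 1/(n+2 : ℝ)) Filter.atTop (nhds 0) := by
        exact Filter.Tendsto.div_atTop tendsto_const_nhds
          (Filter.tendsto_atTop_add_const_right _ 2 tendsto_natCast_atTop_atTop)
      have := (tendsto_const_nhds (x := (1:ℝ)) (f := Filter.atTop (α := ℕ))).sub h1
      simpa using this
    · exact Filter.Eventually.of_forall fun n => hseqmem n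
  have hvmeas : MeasureTheory.AEStronglyMeasurable v
      (MeasureTheory.volume.restrict (Set.uIoc (0:ℝ) (2*Real.pi))) := by
    refine aestronglyMeasurable_of_tendsto_ae Filter.atTop
      (fun n => ((hFmeas _ (hseqmem n)).aestronglyMeasurable).restrict) ?_
    filter_upwards [(MeasureTheory.ae_restrict_mem measurableSet_uIoc).mono (fun θ h => h),
      MeasureTheory.ae_restrict_of_ae hae] with θ hθmem hθ
    exact (hθ hθmem).comp hseq
  have hvB : ∀ θ : ℝ, v θ ≤ M := fun θ => hM _
  haveI : MeasureTheory.IsFiniteMeasure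
      (MeasureTheory.volume.restrict (Set.uIoc (0:ℝ) (2*Real.pi))) := by
    constructor
    rw [MeasureTheory.Measure.restrict_apply_univ, Set.uIoc_of_le hπ.le]
    exact measure_Ioc_lt_top
  have hvint : IntervalIntegrable v MeasureTheory.volume 0 (2*Real.pi) := by
    rw [intervalIntegrable_iff]
    refine MeasureTheory.Integrable.mono' (MeasureTheory.integrable_const M) hvmeas ?_
    refine MeasureTheory.ae_of_all _ fun θ => ?_
    rw [Real.norm_eq_abs, _root_.abs_of_nonneg (norm_nonneg _)]
    exact hvB θ
  have hvint' : (∫ θ in (0:ℝ)..(2*Real.pi), v θ) ≤ 2 * Real.pi * M := by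
    have := intervalIntegral.integral_mono_on hπ.le hvint intervalIntegrable_const
      (fun θ _ => hvB θ)
    simpa using this
  -- conclude
  have hmean : ∀ ρ : ℝ, ρ ∈ Set.Ioo (0:ℝ) 1 → ‖g 0‖
      ≤ (2 * Real.pi)⁻¹ * ∫ θ in (0:ℝ)..(2*Real.pi), ‖g (circleMap 0 ρ θ)‖ := by
    intro ρ hρ
    exact aux_mean hρ.1 hρ.2 (fun w hw => (hgd w hw).differentiableWithinAt)
  have hg0 : ‖g 0‖ ≤ M := by
    have h1 : ‖g 0‖ ≤ (2*Real.pi)⁻¹ * ∫ θ in (0:ℝ)..(2*Real.pi), v θ := by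
      refine ge_of_tendsto (hDCT.const_mul _) ?_
      filter_upwards [eventually_mem_nhdsWithin] with ρ hρ
      exact hmean ρ hρ
    calc ‖g 0‖ ≤ (2*Real.pi)⁻¹ * ∫ θ in (0:ℝ)..(2*Real.pi), v θ := h1
      _ ≤ (2*Real.pi)⁻¹ * (2 * Real.pi * M) := by
          apply mul_le_mul_of_nonneg_left hvint' (by positivity)
      _ = M := by field_simp
  -- unfold g 0
  have hφ0 : φ 0 = z₀ := by rw [hφdef]; simp
  have hg0' : ‖g 0‖ = ‖f z₀‖ * Real.exp (lam * z₀.re) := by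
    rw [hgdef]
    simp only [hφ0, norm_mul, Complex.norm_exp]
    congr 2
    simp [Complex.mul_re]
  rw [hg0'] at hg0
  rw [neg_mul, Real.exp_neg, ← div_eq_mul_inv, le_div_iff₀ (Real.exp_pos _)]
  exact hg0
end

section
/- Let 0 = λ₀ < λ₁ < λ₂ < ⋯ be a strictly increasing sequence tending to infinity. A function f on the right half-plane has at most one asymptotic expansion: if ∑_j ∑_{k=0}^{n_j} p_{jk} e^{-μ_{jk} z - ν_{jk} z̄} and ∑_j ∑_{k=0}^{m_j} q_{jk} e^{-α_{jk} z - β_{jk} z̄} are both asymptotic expansions of f (with respect to possibly different increasing sequences of levels), then all their nonzero terms coincide. -/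
open Filter Complex
open Finset
open scoped Classical

/-- The partial sum up to level `N` of a formal series
`∑_j ∑_{k=0}^{n j} p j k · e^{-μ j k · z - ν j k · conj z}`. -/
noncomputable def partialSumAE (n : ℕ → ℕ) (μ ν : ℕ → ℕ → ℝ) (p : ℕ → ℕ → ℂ)
    (N : ℕ) (z : ℂ) : ℂ :=
  ∑ j ∈ Finset.range (N + 1), ∑ k ∈ Finset.range (n j + 1),
    p j k * Complex.exp (-(μ j k : ℂ) * z - (ν j k : ℂ) * (starRingEnd ℂ z))

/-- `∑_j ∑_{k=0}^{n j} p j k e^{-μ j k z - ν j k z̄}` is an asymptotic expansion of `f`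
on the right half-plane, with strictly increasing levels `lam j → ∞`, `lam 0 = 0`,
`μ j k + ν j k = lam j`, `μ j k, ν j k ≥ 0`. -/
def IsAsymptoticExpansion (f : ℂ → ℂ) (lam : ℕ → ℝ) (n : ℕ → ℕ)
    (μ ν : ℕ → ℕ → ℝ) (p : ℕ → ℕ → ℂ) : Prop :=
  lam 0 = 0 ∧ StrictMono lam ∧ Filter.Tendsto lam Filter.atTop Filter.atTop ∧
    (∀ j k, k ≤ n j → 0 ≤ μ j k ∧ 0 ≤ ν j k ∧ μ j k + ν j k = lam j) ∧
    ∀ N : ℕ, Filter.Tendsto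
      (fun z : ℂ => ‖f z - partialSumAE n μ ν p N z‖ * Real.exp (lam N * z.re))
      (Filter.comap Complex.re Filter.atTop) (nhds 0)

lemma charsAE : ∀ (t : Finset ℝ) (d : ℝ → ℂ),
    (∀ y : ℝ, ∑ θ ∈ t, d θ * Complex.exp ((θ : ℂ) * I * (y : ℂ)) = 0) →
    ∀ θ ∈ t, d θ = 0 := by
  intro t
  induction t using Finset.strongInduction with
  | _ t ih =>
    intro d h θ hθ
    have key : ∀ θ' ∈ t.erase θ, d θ' = 0 := by
      intro θ' hθ'
      have hne : θ' ≠ θ := Finset.ne_of_mem_erase hθ'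
      set u : ℝ := Real.pi / (θ' - θ) with hu
      have h2 : ∀ y : ℝ, ∑ x ∈ t.erase θ,
          (d x * (Complex.exp ((x:ℂ) * I * (u:ℂ)) - Complex.exp ((θ:ℂ) * I * (u:ℂ)))) *
            Complex.exp ((x:ℂ) * I * (y:ℂ)) = 0 := by
        intro y
        have e1 := h (y + u)
        have e2 := h y
        have e3 : ∑ x ∈ t, d x * (Complex.exp ((x:ℂ) * I * (u:ℂ)) -
            Complex.exp ((θ:ℂ) * I * (u:ℂ))) * Complex.exp ((x:ℂ) * I * (y:ℂ)) = 0 := by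
          have expand : ∀ x ∈ t, d x * (Complex.exp ((x:ℂ) * I * (u:ℂ)) -
              Complex.exp ((θ:ℂ) * I * (u:ℂ))) * Complex.exp ((x:ℂ) * I * (y:ℂ))
              = d x * Complex.exp ((x:ℂ) * I * ((y:ℝ) + u : ℝ))
                - Complex.exp ((θ:ℂ) * I * (u:ℂ)) * (d x * Complex.exp ((x:ℂ) * I * (y:ℂ))) := by
            intro x hx
            push_cast
            rw [mul_add, Complex.exp_add]
            ring
          rw [Finset.sum_congr rfl expand, Finset.sum_sub_distrib, e1, ← Finset.mul_sum, e2]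
          simp
        rw [← Finset.sum_erase t (a := θ) (by simp)] at e3
        exact e3
      have := ih (t.erase θ) (Finset.erase_ssubset hθ) _ h2 θ' hθ'
      have hfac : Complex.exp ((θ':ℂ) * I * (u:ℂ)) - Complex.exp ((θ:ℂ) * I * (u:ℂ)) ≠ 0 := by
        rw [sub_ne_zero]
        intro hcon
        rw [Complex.exp_eq_exp_iff_exp_sub_eq_one] at hcon
        have : (θ':ℂ) * I * (u:ℂ) - (θ:ℂ) * I * (u:ℂ) = ((Real.pi : ℂ)) * I := by
          have hsub : θ' - θ ≠ 0 := sub_ne_zero.mpr hne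
          have hc : ((θ':ℂ) - (θ:ℂ)) ≠ 0 := by
            exact_mod_cast Complex.ofReal_ne_zero.mpr hsub
          rw [hu]
          push_cast
          field_simp
        rw [this, Complex.exp_pi_mul_I] at hcon
        norm_num at hcon
      exact (mul_eq_zero.mp this).resolve_right hfac
    have h0 := h 0
    rw [← Finset.sum_erase_add t _ hθ] at h0
    rw [Finset.sum_eq_zero (fun x hx => by rw [key x hx]; simp)] at h0
    simpa using h0

lemma keyAE {ι : Type} :
    ∀ (s : Finset ι) (a b : ι → ℝ) (c : ι → ℂ) (lam : ℝ),
    Tendsto (fun z : ℂ =>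
        ‖∑ i ∈ s, c i * Complex.exp (-(a i : ℂ) * z - (b i : ℂ) * (starRingEnd ℂ z))‖ *
          Real.exp (lam * z.re))
      (comap Complex.re atTop) (nhds 0) →
    ∀ A B : ℝ, A + B ≤ lam →
      ∑ i ∈ s.filter (fun i => a i = A ∧ b i = B), c i = 0 := by
  intro s
  induction s using Finset.strongInduction with
  | _ s ih =>
  intro a b c lam H A B hAB
  rcases s.eq_empty_or_nonempty with rfl | hne
  · simp
  obtain ⟨i₀, hi₀s, hmin⟩ := Finset.exists_min_image s (fun i => a i + b i) hne
  set L : ℝ := a i₀ + b i₀ with hLdef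
  by_cases hLlam : L ≤ lam
  swap
  · have hemp : s.filter (fun i => a i = A ∧ b i = B) = ∅ := by
      rw [Finset.filter_eq_empty_iff]
      rintro i hi ⟨hA, hB⟩
      have h1 := hmin i hi
      rw [hA, hB] at h1
      push_neg at hLlam
      linarith
    rw [hemp, Finset.sum_empty]
  -- Step A : decay at rate L
  have hre : ∀ᶠ z : ℂ in comap Complex.re atTop, 0 ≤ z.re :=
    tendsto_comap.eventually (eventually_ge_atTop 0)
  have HL : Tendsto (fun z : ℂ =>
      ‖∑ i ∈ s, c i * Complex.exp (-(a i : ℂ) * z - (b i : ℂ) * (starRingEnd ℂ z))‖ *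
        Real.exp (L * z.re)) (comap Complex.re atTop) (nhds 0) := by
    refine squeeze_zero' (Eventually.of_forall fun z => by positivity)
      (hre.mono fun z hz => ?_) H
    exact mul_le_mul_of_nonneg_left
      (Real.exp_le_exp.mpr (mul_le_mul_of_nonneg_right hLlam hz)) (norm_nonneg _)
  -- Step B : the trig polynomial at level L vanishes
  have hT : ∀ y : ℝ, ∑ i ∈ s.filter (fun i => a i + b i = L),
      c i * Complex.exp (((b i - a i : ℝ) : ℂ) * I * (y : ℂ)) = 0 := by
    intro y
    have hline : Tendsto (fun x : ℝ => ((x : ℂ) + (y : ℂ) * I)) atTop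
        (comap Complex.re atTop) := by
      rw [tendsto_comap_iff]
      have hfun : (Complex.re ∘ fun x : ℝ => ((x : ℂ) + (y : ℂ) * I)) = fun x => x := by
        funext x; simp
      rw [hfun]; exact tendsto_id
    have h1 : Tendsto (fun x : ℝ =>
        ‖(∑ i ∈ s, c i * Complex.exp (-(a i : ℂ) * ((x : ℂ) + (y : ℂ) * I)
            - (b i : ℂ) * (starRingEnd ℂ ((x : ℂ) + (y : ℂ) * I)))) *
          Complex.exp ((L : ℂ) * (x : ℂ))‖) atTop (nhds 0) := by
      refine Tendsto.congr (fun x => ?_) (HL.comp hline)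
      simp only [Function.comp]
      rw [norm_mul, Complex.norm_exp]
      have hxre : ((L : ℂ) * (x : ℂ)).re = L * x := by simp
      have hzre : ((x : ℂ) + (y : ℂ) * I).re = x := by simp
      rw [hxre, hzre]
    have h2 : Tendsto (fun x : ℝ =>
        (∑ i ∈ s, c i * Complex.exp (-(a i : ℂ) * ((x : ℂ) + (y : ℂ) * I)
            - (b i : ℂ) * (starRingEnd ℂ ((x : ℂ) + (y : ℂ) * I)))) *
          Complex.exp ((L : ℂ) * (x : ℂ))) atTop
        (nhds (∑ i ∈ s, if a i + b i = L then
          c i * Complex.exp (((b i - a i : ℝ) : ℂ) * I * (y : ℂ)) else 0)) := by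
      have hfe : (fun x : ℝ =>
          (∑ i ∈ s, c i * Complex.exp (-(a i : ℂ) * ((x : ℂ) + (y : ℂ) * I)
              - (b i : ℂ) * (starRingEnd ℂ ((x : ℂ) + (y : ℂ) * I)))) *
            Complex.exp ((L : ℂ) * (x : ℂ)))
          = fun x : ℝ => ∑ i ∈ s,
              c i * Complex.exp (((L - a i - b i : ℝ) : ℂ) * (x : ℂ)) *
                Complex.exp (((b i - a i : ℝ) : ℂ) * I * (y : ℂ)) := by
        funext x
        rw [Finset.sum_mul]
        refine Finset.sum_congr rfl fun i _ => ?_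
        rw [mul_assoc, mul_assoc]
        congr 1
        rw [← Complex.exp_add, ← Complex.exp_add]
        congr 1
        have hconj : (starRingEnd ℂ) ((x : ℂ) + (y : ℂ) * I) = (x : ℂ) - (y : ℂ) * I := by
          simp [Complex.ext_iff]
        rw [hconj]
        push_cast
        ring
      rw [hfe]
      refine tendsto_finset_sum _ fun i hi => ?_
      by_cases hiL : a i + b i = L
      · rw [if_pos hiL]
        have hzero : (L - a i - b i : ℝ) = 0 := by linarith
        have : (fun x : ℝ => c i * Complex.exp (((L - a i - b i : ℝ) : ℂ) * (x : ℂ)) *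
            Complex.exp (((b i - a i : ℝ) : ℂ) * I * (y : ℂ)))
            = fun _ : ℝ => c i * Complex.exp (((b i - a i : ℝ) : ℂ) * I * (y : ℂ)) := by
          funext x
          rw [hzero]
          simp
        rw [this]
        exact tendsto_const_nhds
      · rw [if_neg hiL]
        rw [tendsto_zero_iff_norm_tendsto_zero]
        have hK : (L - a i - b i : ℝ) < 0 := by
          have := hmin i hi
          rcases lt_or_eq_of_le this with h | h
          · linarith
          · exact absurd h.symm hiL
        have hexp : Tendsto (fun x : ℝ => Real.exp ((L - a i - b i) * x)) atTop (nhds 0) :=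
          Real.tendsto_exp_atBot.comp ((tendsto_const_mul_atBot_of_neg hK).mpr tendsto_id)
        have heq : (fun x : ℝ => ‖c i * Complex.exp (((L - a i - b i : ℝ) : ℂ) * (x : ℂ)) *
            Complex.exp (((b i - a i : ℝ) : ℂ) * I * (y : ℂ))‖)
            = fun x : ℝ => ‖c i‖ * Real.exp ((L - a i - b i) * x) *
                ‖Complex.exp (((b i - a i : ℝ) : ℂ) * I * (y : ℂ))‖ := by
          funext x
          rw [norm_mul, norm_mul]
          congr 2
          rw [Complex.norm_exp]
          congr 1
          simp
        rw [heq]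
        have := (hexp.const_mul ‖c i‖).mul_const
          ‖Complex.exp (((b i - a i : ℝ) : ℂ) * I * (y : ℂ))‖
        simpa using this
    have hTn := tendsto_nhds_unique h2.norm h1
    have hzero : (∑ i ∈ s, if a i + b i = L then
        c i * Complex.exp (((b i - a i : ℝ) : ℂ) * I * (y : ℂ)) else 0) = 0 := by
      rwa [norm_eq_zero] at hTn
    rw [Finset.sum_filter]
    exact hzero
  -- Step C : coefficients at level L, grouped by frequency, vanish
  have hdz : ∀ θ ∈ (s.filter (fun i => a i + b i = L)).image (fun i => b i - a i),
      (∑ i ∈ (s.filter (fun i => a i + b i = L)).filter (fun i => b i - a i = θ), c i) = 0 := by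
    refine charsAE _ _ ?_
    intro y
    have hfib : ∑ θ ∈ (s.filter (fun i => a i + b i = L)).image (fun i => b i - a i),
        (∑ i ∈ (s.filter (fun i => a i + b i = L)).filter (fun i => b i - a i = θ), c i) *
          Complex.exp ((θ : ℂ) * I * (y : ℂ))
        = ∑ i ∈ s.filter (fun i => a i + b i = L),
            c i * Complex.exp (((b i - a i : ℝ) : ℂ) * I * (y : ℂ)) := by
      rw [← Finset.sum_fiberwise_of_maps_to (g := fun i => b i - a i)
        (fun i hi => Finset.mem_image_of_mem _ hi)
        (fun i => c i * Complex.exp (((b i - a i : ℝ) : ℂ) * I * (y : ℂ)))]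
      refine Finset.sum_congr rfl fun θ hθ => ?_
      rw [Finset.sum_mul]
      refine Finset.sum_congr rfl fun i hi => ?_
      have hθi := (Finset.mem_filter.mp hi).2
      rw [hθi]
    rw [hfib, hT y]
  -- Step D : the level-L part is identically zero
  have hzero : ∀ z : ℂ, ∑ i ∈ s.filter (fun i => a i + b i = L),
      c i * Complex.exp (-(a i : ℂ) * z - (b i : ℂ) * (starRingEnd ℂ z)) = 0 := by
    intro z
    rw [← Finset.sum_fiberwise_of_maps_to (g := fun i => b i - a i)
      (fun i hi => Finset.mem_image_of_mem _ hi)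
      (fun i => c i * Complex.exp (-(a i : ℂ) * z - (b i : ℂ) * (starRingEnd ℂ z)))]
    refine Finset.sum_eq_zero fun θ hθ => ?_
    have hconst : ∀ i ∈ (s.filter (fun i => a i + b i = L)).filter (fun i => b i - a i = θ),
        c i * Complex.exp (-(a i : ℂ) * z - (b i : ℂ) * (starRingEnd ℂ z))
        = c i * Complex.exp (-((((L - θ) / 2 : ℝ)) : ℂ) * z -
            (((L + θ) / 2 : ℝ) : ℂ) * (starRingEnd ℂ z)) := by
      intro i hi
      obtain ⟨hi0, hθi⟩ := Finset.mem_filter.mp hi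
      obtain ⟨_, hiL⟩ := Finset.mem_filter.mp hi0
      have ha : a i = (L - θ) / 2 := by linarith
      have hb : b i = (L + θ) / 2 := by linarith
      rw [ha, hb]
    rw [Finset.sum_congr rfl hconst, ← Finset.sum_mul, hdz θ hθ, zero_mul]
  -- Step E : strip level L and apply the induction hypothesis
  have hsplit : ∀ z : ℂ, ∑ i ∈ s.filter (fun i => ¬a i + b i = L),
      c i * Complex.exp (-(a i : ℂ) * z - (b i : ℂ) * (starRingEnd ℂ z))
      = ∑ i ∈ s, c i * Complex.exp (-(a i : ℂ) * z - (b i : ℂ) * (starRingEnd ℂ z)) := by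
    intro z
    have hsp := Finset.sum_filter_add_sum_filter_not s (fun i => a i + b i = L)
      (fun i => c i * Complex.exp (-(a i : ℂ) * z - (b i : ℂ) * (starRingEnd ℂ z)))
    rw [hzero z, zero_add] at hsp
    exact hsp
  have H' : Tendsto (fun z : ℂ =>
      ‖∑ i ∈ s.filter (fun i => ¬a i + b i = L),
        c i * Complex.exp (-(a i : ℂ) * z - (b i : ℂ) * (starRingEnd ℂ z))‖ *
        Real.exp (lam * z.re)) (comap Complex.re atTop) (nhds 0) :=
    H.congr fun z => by rw [hsplit z]
  have hss : s.filter (fun i => ¬a i + b i = L) ⊂ s :=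
    Finset.filter_ssubset.mpr ⟨i₀, hi₀s, not_not_intro hLdef.symm⟩
  have IH := ih _ hss a b c lam H'
  -- Step F : conclude
  by_cases hABL : A + B = L
  · have hfe : s.filter (fun i => a i = A ∧ b i = B)
        = (s.filter (fun i => a i + b i = L)).filter (fun i => b i - a i = B - A) := by
      ext i
      simp only [Finset.mem_filter, and_assoc]
      constructor
      · rintro ⟨his, hA, hB⟩
        refine ⟨his, ?_, ?_⟩ <;> rw [hA, hB]
        · exact hABL
      · rintro ⟨his, hL', hθ'⟩
        have hA : a i = A := by linarith
        have hB : b i = B := by linarith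
        exact ⟨his, hA, hB⟩
    rw [hfe]
    rcases ((s.filter (fun i => a i + b i = L)).filter
        (fun i => b i - a i = B - A)).eq_empty_or_nonempty with he | ⟨i₁, hi₁⟩
    · rw [he, Finset.sum_empty]
    · have hmem : (B - A) ∈ (s.filter (fun i => a i + b i = L)).image (fun i => b i - a i) := by
        obtain ⟨h1, h2⟩ := Finset.mem_filter.mp hi₁
        exact Finset.mem_image.mpr ⟨i₁, h1, h2⟩
      exact hdz _ hmem
  · have hfe : s.filter (fun i => a i = A ∧ b i = B)
        = (s.filter (fun i => ¬a i + b i = L)).filter (fun i => a i = A ∧ b i = B) := by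
      ext i
      simp only [Finset.mem_filter, and_assoc]
      constructor
      · rintro ⟨his, hA, hB⟩
        refine ⟨his, ?_, hA, hB⟩
        rw [hA, hB]
        exact hABL
      · rintro ⟨his, _, hA, hB⟩
        exact ⟨his, hA, hB⟩
    rw [hfe]
    exact IH A B hAB

lemma mainDirAE (f : ℂ → ℂ)
    (lam : ℕ → ℝ) (n : ℕ → ℕ) (μ ν : ℕ → ℕ → ℝ) (p : ℕ → ℕ → ℂ)
    (gam : ℕ → ℝ) (m : ℕ → ℕ) (α β : ℕ → ℕ → ℝ) (q : ℕ → ℕ → ℂ)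
    (h₁ : IsAsymptoticExpansion f lam n μ ν p)
    (h₂ : IsAsymptoticExpansion f gam m α β q)
    (hinj₁ : ∀ j, Set.InjOn (fun k => (μ j k, ν j k)) {k | k ≤ n j})
    (hinj₂ : ∀ j, Set.InjOn (fun k => (α j k, β j k)) {k | k ≤ m j}) :
    ∀ j k, k ≤ n j → p j k ≠ 0 →
      ∃ j' k', k' ≤ m j' ∧ q j' k' = p j k ∧ α j' k' = μ j k ∧ β j' k' = ν j k := by
  obtain ⟨hlam0, hlamm, hlamtop, hμν, hcv₁⟩ := h₁
  obtain ⟨hgam0, hgamm, hgamtop, hαβ, hcv₂⟩ := h₂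
  intro j k hk hp
  obtain ⟨M, hM⟩ := (hgamtop.eventually (eventually_ge_atTop (lam j))).exists
  have hre : ∀ᶠ z : ℂ in comap Complex.re atTop, 0 ≤ z.re :=
    tendsto_comap.eventually (eventually_ge_atTop 0)
  have E₁ := hcv₁ j
  have E₂ : Tendsto (fun z : ℂ =>
      ‖f z - partialSumAE m α β q M z‖ * Real.exp (lam j * z.re))
      (comap Complex.re atTop) (nhds 0) := by
    refine squeeze_zero' (Eventually.of_forall fun z => by positivity)
      (hre.mono fun z hz => ?_) (hcv₂ M)
    exact mul_le_mul_of_nonneg_left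
      (Real.exp_le_exp.mpr (mul_le_mul_of_nonneg_right hM hz)) (norm_nonneg _)
  have Ediff : Tendsto (fun z : ℂ =>
      ‖partialSumAE n μ ν p j z - partialSumAE m α β q M z‖ * Real.exp (lam j * z.re))
      (comap Complex.re atTop) (nhds 0) := by
    have hsum := E₁.add E₂
    rw [add_zero] at hsum
    refine squeeze_zero' (Eventually.of_forall fun z => by positivity)
      (Eventually.of_forall fun z => ?_) hsum
    rw [← add_mul]
    refine mul_le_mul_of_nonneg_right ?_ (Real.exp_nonneg _)
    calc ‖partialSumAE n μ ν p j z - partialSumAE m α β q M z‖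
        = ‖(f z - partialSumAE m α β q M z) - (f z - partialSumAE n μ ν p j z)‖ := by
          congr 1; ring
      _ ≤ ‖f z - partialSumAE m α β q M z‖ + ‖f z - partialSumAE n μ ν p j z‖ :=
          norm_sub_le _ _
      _ = ‖f z - partialSumAE n μ ν p j z‖ +
          ‖f z - partialSumAE m α β q M z‖ := by
          ring
  -- representation of the difference of partial sums as one indexed sum
  set sig1 : Finset ((_ : ℕ) × ℕ) :=
    (Finset.range (j + 1)).sigma (fun j' => Finset.range (n j' + 1)) with hsig1
  set sig2 : Finset ((_ : ℕ) × ℕ) :=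
    (Finset.range (M + 1)).sigma (fun j' => Finset.range (m j' + 1)) with hsig2
  have hrepr : ∀ z : ℂ, ∑ i ∈ sig1.disjSum sig2,
      (Sum.elim (fun x : (_ : ℕ) × ℕ => p x.1 x.2) (fun x : (_ : ℕ) × ℕ => -q x.1 x.2)) i *
        Complex.exp (-((Sum.elim (fun x : (_ : ℕ) × ℕ => μ x.1 x.2)
            (fun x : (_ : ℕ) × ℕ => α x.1 x.2)) i : ℂ) * z -
          ((Sum.elim (fun x : (_ : ℕ) × ℕ => ν x.1 x.2)
            (fun x : (_ : ℕ) × ℕ => β x.1 x.2)) i : ℂ) * (starRingEnd ℂ z))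
      = partialSumAE n μ ν p j z - partialSumAE m α β q M z := by
    intro z
    rw [Finset.sum_disjSum]
    simp only [Sum.elim_inl, Sum.elim_inr]
    unfold partialSumAE
    rw [Finset.sum_sigma' (f := fun j' k =>
        p j' k * Complex.exp (-(μ j' k : ℂ) * z - (ν j' k : ℂ) * (starRingEnd ℂ z))),
      Finset.sum_sigma' (f := fun j' k =>
        q j' k * Complex.exp (-(α j' k : ℂ) * z - (β j' k : ℂ) * (starRingEnd ℂ z))),
      sub_eq_add_neg, ← Finset.sum_neg_distrib]
    congr 1
    refine Finset.sum_congr rfl fun x _ => ?_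
    ring
  have h0 := keyAE (sig1.disjSum sig2)
    (Sum.elim (fun x : (_ : ℕ) × ℕ => μ x.1 x.2) (fun x : (_ : ℕ) × ℕ => α x.1 x.2))
    (Sum.elim (fun x : (_ : ℕ) × ℕ => ν x.1 x.2) (fun x : (_ : ℕ) × ℕ => β x.1 x.2))
    (Sum.elim (fun x : (_ : ℕ) × ℕ => p x.1 x.2) (fun x : (_ : ℕ) × ℕ => -q x.1 x.2))
    (lam j)
    (Ediff.congr fun z => by rw [← hrepr z])
    (μ j k) (ν j k) (le_of_eq (hμν j k hk).2.2)
  rw [Finset.sum_filter, Finset.sum_disjSum] at h0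
  replace h0 : (∑ x ∈ sig1.filter (fun x => μ x.1 x.2 = μ j k ∧ ν x.1 x.2 = ν j k),
      p x.1 x.2) + ∑ x ∈ sig2.filter (fun x => α x.1 x.2 = μ j k ∧ β x.1 x.2 = ν j k),
      -q x.1 x.2 = 0 := by
    rw [Finset.sum_filter, Finset.sum_filter]; exact h0
  -- identify the first fiber
  have hleft : sig1.filter (fun x => μ x.1 x.2 = μ j k ∧ ν x.1 x.2 = ν j k)
      = {⟨j, k⟩} := by
    ext ⟨j₂, k₂⟩
    simp only [Finset.mem_filter, Finset.mem_sigma, Finset.mem_range, Finset.mem_singleton,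
      Sigma.mk.inj_iff, heq_eq_eq, hsig1]
    constructor
    · rintro ⟨⟨hj₂, hk₂⟩, hμ2, hν2⟩
      have hk₂' : k₂ ≤ n j₂ := Nat.lt_succ_iff.mp hk₂
      have hlv : lam j₂ = lam j := by
        rw [← (hμν j₂ k₂ hk₂').2.2, ← (hμν j k hk).2.2, hμ2, hν2]
      have hj : j₂ = j := hlamm.injective hlv
      subst hj
      refine ⟨rfl, hinj₁ j₂ hk₂' hk ?_⟩
      simp only [Prod.mk.injEq]
      exact ⟨hμ2, hν2⟩
    · rintro ⟨rfl, rfl⟩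
      exact ⟨⟨Nat.lt_succ_self _, Nat.lt_succ_of_le hk⟩, rfl, rfl⟩
  rw [hleft, Finset.sum_singleton, Finset.sum_neg_distrib] at h0
  have hqsum : (∑ x ∈ sig2.filter (fun x => α x.1 x.2 = μ j k ∧ β x.1 x.2 = ν j k),
      q x.1 x.2) = p j k := by linear_combination -h0
  rcases (sig2.filter (fun x => α x.1 x.2 = μ j k ∧ β x.1 x.2 = ν j k)).eq_empty_or_nonempty
    with he | ⟨⟨j', k'⟩, hmem⟩
  · rw [he, Finset.sum_empty] at hqsum
    exact absurd hqsum.symm hp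
  · obtain ⟨hin, hα', hβ'⟩ := Finset.mem_filter.mp hmem
    obtain ⟨hj'0, hk'0⟩ := Finset.mem_sigma.mp hin
    have hj' : j' < M + 1 := by simpa using hj'0
    have hk' : k' < m j' + 1 := by simpa using hk'0
    have hk'' : k' ≤ m j' := Nat.lt_succ_iff.mp hk'
    have hsingle : sig2.filter (fun x => α x.1 x.2 = μ j k ∧ β x.1 x.2 = ν j k)
        = {⟨j', k'⟩} := by
      ext ⟨j₂, k₂⟩
      simp only [Finset.mem_filter, Finset.mem_sigma, Finset.mem_range, Finset.mem_singleton,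
        Sigma.mk.inj_iff, heq_eq_eq, hsig2]
      constructor
      · rintro ⟨⟨hj₂, hk₂⟩, hα2, hβ2⟩
        have hk₂' : k₂ ≤ m j₂ := Nat.lt_succ_iff.mp hk₂
        have hlv : gam j₂ = gam j' := by
          rw [← (hαβ j₂ k₂ hk₂').2.2, ← (hαβ j' k' hk'').2.2, hα2, hβ2, hα', hβ']
        have hj : j₂ = j' := hgamm.injective hlv
        subst hj
        refine ⟨rfl, hinj₂ j₂ hk₂' hk'' ?_⟩
        simp only [Prod.mk.injEq]
        rw [hα2, hβ2, hα', hβ']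
        exact ⟨rfl, rfl⟩
      · rintro ⟨rfl, rfl⟩
        exact ⟨⟨by omega, by omega⟩, hα', hβ'⟩
    rw [hsingle, Finset.sum_singleton] at hqsum
    exact ⟨j', k', hk'', hqsum, hα', hβ'⟩

/-- **Uniqueness of asymptotic expansions.** If `f` has two asymptotic expansions (with
possibly different level sequences), in each of which the exponent pairs within a level
are pairwise distinct, then all their nonzero terms coincide: every nonzero term
`p j k · e^{-μ j k z - ν j k z̄}` of the first expansion appears in the second, and
vice versa. -/
theorem stmt_1 (f : ℂ → ℂ)
    (lam : ℕ → ℝ) (n : ℕ → ℕ) (μ ν : ℕ → ℕ → ℝ) (p : ℕ → ℕ → ℂ)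
    (gam : ℕ → ℝ) (m : ℕ → ℕ) (α β : ℕ → ℕ → ℝ) (q : ℕ → ℕ → ℂ)
    (h₁ : IsAsymptoticExpansion f lam n μ ν p)
    (h₂ : IsAsymptoticExpansion f gam m α β q)
    (hinj₁ : ∀ j, Set.InjOn (fun k => (μ j k, ν j k)) {k | k ≤ n j})
    (hinj₂ : ∀ j, Set.InjOn (fun k => (α j k, β j k)) {k | k ≤ m j}) :
    (∀ j k, k ≤ n j → p j k ≠ 0 →
      ∃ j' k', k' ≤ m j' ∧ q j' k' = p j k ∧ α j' k' = μ j k ∧ β j' k' = ν j k) ∧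
    (∀ j' k', k' ≤ m j' → q j' k' ≠ 0 →
      ∃ j k, k ≤ n j ∧ p j k = q j' k' ∧ μ j k = α j' k' ∧ ν j k = β j' k') := by
  refine ⟨mainDirAE f lam n μ ν p gam m α β q h₁ h₂ hinj₁ hinj₂,
    fun j' k' hk' hq => ?_⟩
  exact mainDirAE f gam m α β q lam n μ ν p h₂ h₁ hinj₂ hinj₁ j' k' hk' hq
end

section
/- If a holomorphic function on the right half-plane H has an asymptotic expansion ∑_j ∑_k p_{jk} e^{-μ_{jk} z - ν_{jk} z̄}, then every term with a nonzero coefficient has ν_{jk} = 0; i.e., the expansion contains no genuinely anti-holomorphic exponentials. -/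
open Filter Complex intervalIntegral

lemma expInt_tendsto (c : ℝ) :
    Tendsto (fun T : ℝ => (∫ y in (0:ℝ)..T, Complex.exp ((c : ℂ) * I * y)) / (T : ℂ)) atTop
      (nhds (if c = 0 then 1 else 0)) := by
  by_cases hc : c = 0
  · simp only [hc, if_pos, Complex.ofReal_zero, zero_mul, Complex.exp_zero]
    have h1 : (fun T : ℝ => (∫ y in (0:ℝ)..T, (1:ℂ)) / (T:ℂ)) =ᶠ[atTop] fun _ => 1 := by
      filter_upwards [eventually_ge_atTop (1:ℝ)] with T hT
      have hT0 : (T:ℂ) ≠ 0 := by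
        simp only [ne_eq, Complex.ofReal_eq_zero]; linarith
      simp [intervalIntegral.integral_const, hT0]
    exact tendsto_const_nhds.congr' h1.symm
  · rw [if_neg hc]
    have hcI : (c : ℂ) * I ≠ 0 := by
      simp [Complex.ofReal_eq_zero, hc, Complex.I_ne_zero]
    have key : ∀ T : ℝ, (∫ y in (0:ℝ)..T, Complex.exp ((c:ℂ) * I * y))
        = (Complex.exp ((c:ℂ) * I * T) - Complex.exp ((c:ℂ) * I * (0:ℝ))) / ((c:ℂ) * I) :=
      fun T => integral_exp_mul_complex hcI
    have hbd : ∀ T : ℝ, 1 ≤ T →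
        ‖(∫ y in (0:ℝ)..T, Complex.exp ((c:ℂ) * I * y)) / (T:ℂ)‖ ≤ (2 / |c|) / T := by
      intro T hT
      have hTpos : (0:ℝ) < T := by linarith
      have hexp : ∀ s : ℝ, ‖Complex.exp ((c:ℂ) * I * (s:ℂ))‖ = 1 := by
        intro s
        rw [Complex.norm_exp]
        have : ((c:ℂ) * I * (s:ℂ)).re = 0 := by simp
        rw [this, Real.exp_zero]
      rw [key T, norm_div, norm_div]
      have h2 : ‖Complex.exp ((c:ℂ) * I * (T:ℝ)) - Complex.exp ((c:ℂ) * I * ((0:ℝ):ℂ))‖ ≤ 2 := by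
        calc ‖Complex.exp ((c:ℂ) * I * (T:ℝ)) - Complex.exp ((c:ℂ) * I * ((0:ℝ):ℂ))‖
            ≤ ‖Complex.exp ((c:ℂ) * I * (T:ℝ))‖ + ‖Complex.exp ((c:ℂ) * I * ((0:ℝ):ℂ))‖ :=
              norm_sub_le _ _
          _ ≤ 2 := by rw [hexp T, hexp 0]; norm_num
      have hcn : ‖(c:ℂ) * I‖ = |c| := by
        rw [norm_mul, Complex.norm_I, Complex.norm_real, Real.norm_eq_abs, mul_one]
      have hTn : ‖(T:ℂ)‖ = T := by
        rw [Complex.norm_real, Real.norm_eq_abs, abs_of_pos hTpos]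
      rw [hcn, hTn]
      gcongr
    have hb : Tendsto (fun T : ℝ => (2 / |c|) / T) atTop (nhds 0) :=
      tendsto_const_nhds.div_atTop tendsto_id
    have hev : ∀ᶠ T : ℝ in atTop,
        ‖(∫ y in (0:ℝ)..T, Complex.exp ((c:ℂ) * I * y)) / (T:ℂ)‖ ≤ (2 / |c|) / T := by
      filter_upwards [eventually_ge_atTop (1:ℝ)] with T hT using hbd T hT
    exact squeeze_zero_norm' hev hb

/-- **Asymptotic expansions of holomorphic functions have no anti-holomorphic terms.**
If `f` is holomorphic on the right half-plane and has an asymptotic expansion (with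
pairwise distinct exponent pairs within each level), then every term with a nonzero
coefficient has `ν j k = 0`. -/
theorem stmt_2 (f : ℂ → ℂ)
    (lam : ℕ → ℝ) (n : ℕ → ℕ) (μ ν : ℕ → ℕ → ℝ) (p : ℕ → ℕ → ℂ)
    (hf : DifferentiableOn ℂ f {z : ℂ | 0 < z.re})
    (h : IsAsymptoticExpansion f lam n μ ν p)
    (hinj : ∀ j, Set.InjOn (fun k => (μ j k, ν j k)) {k | k ≤ n j}) :
    ∀ j k, k ≤ n j → p j k ≠ 0 → ν j k = 0 := by
  obtain ⟨h0, hmono, -, hμν, hN⟩ := h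
  intro j
  induction j using Nat.strong_induction_on with
  | _ j IH =>
  intro k0 hk0 hp0
  by_contra hν0
  set L := Filter.comap Complex.re Filter.atTop with hL
  -- the sum of all previous levels; holomorphic by the inductive hypothesis
  set prev : ℂ → ℂ := fun z => ∑ i ∈ Finset.range j, ∑ k ∈ Finset.range (n i + 1),
      p i k * Complex.exp (-(μ i k : ℂ) * z - (ν i k : ℂ) * (starRingEnd ℂ z)) with hprevdef
  have hprev : Differentiable ℂ prev := by
    apply Differentiable.fun_sum
    intro i hi
    apply Differentiable.fun_sum
    intro k hk
    by_cases hp : p i k = 0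
    · simp only [hp, zero_mul]
      exact differentiable_const 0
    · have hνik : ν i k = 0 :=
        IH i (Finset.mem_range.mp hi) k (Nat.lt_succ_iff.mp (Finset.mem_range.mp hk)) hp
      have : (fun z : ℂ => p i k * Complex.exp (-(μ i k : ℂ) * z
          - (ν i k : ℂ) * (starRingEnd ℂ z)))
          = fun z : ℂ => p i k * Complex.exp (-(μ i k : ℂ) * z) := by
        funext z
        rw [hνik]
        norm_num
      rw [this]
      exact (differentiable_const _).mul ((differentiable_id.const_mul _).cexp)
  set g : ℂ → ℂ := fun z => (f z - prev z) * Complex.exp ((lam j : ℂ) * z) with hgdef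
  set Hf : ℝ → ℂ := fun y => ∑ k ∈ Finset.range (n j + 1),
      p j k * Complex.exp (((2 * ν j k : ℝ) : ℂ) * I * (y : ℂ)) with hHfdef
  -- the key algebraic identity
  have hkey : ∀ z : ℂ, g z - Hf z.im
      = (f z - partialSumAE n μ ν p j z) * Complex.exp ((lam j : ℂ) * z) := by
    intro z
    have hterm : ∀ k ∈ Finset.range (n j + 1),
        p j k * Complex.exp (-(μ j k : ℂ) * z - (ν j k : ℂ) * (starRingEnd ℂ z))
            * Complex.exp ((lam j : ℂ) * z)
        = p j k * Complex.exp (((2 * ν j k : ℝ) : ℂ) * I * (z.im : ℂ)) := by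
      intro k hk
      obtain ⟨-, -, hsumk⟩ := hμν j k (Nat.lt_succ_iff.mp (Finset.mem_range.mp hk))
      rw [mul_assoc, ← Complex.exp_add]
      congr 2
      have hc : (lam j : ℂ) = (μ j k : ℂ) + (ν j k : ℂ) := by
        rw [← hsumk]; push_cast; ring
      have hzc : z - starRingEnd ℂ z = ((2 * z.im : ℝ) : ℂ) * I := Complex.sub_conj z
      rw [hc]
      have : -(μ j k : ℂ) * z - (ν j k : ℂ) * (starRingEnd ℂ z)
          + ((μ j k : ℂ) + (ν j k : ℂ)) * z = (ν j k : ℂ) * (z - starRingEnd ℂ z) := by ring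
      rw [this, hzc]
      push_cast
      ring
    have hsum : partialSumAE n μ ν p j z = prev z + ∑ k ∈ Finset.range (n j + 1),
        p j k * Complex.exp (-(μ j k : ℂ) * z - (ν j k : ℂ) * (starRingEnd ℂ z)) := by
      rw [partialSumAE, Finset.sum_range_succ, hprevdef]
    rw [hsum]
    have hS : (∑ k ∈ Finset.range (n j + 1),
        p j k * Complex.exp (-(μ j k : ℂ) * z - (ν j k : ℂ) * (starRingEnd ℂ z)))
          * Complex.exp ((lam j : ℂ) * z) = Hf z.im := by
      rw [hHfdef]
      simp only
      rw [Finset.sum_mul]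
      exact Finset.sum_congr rfl hterm
    rw [← hS]
    simp only [hgdef]
    ring
  -- the limit of g minus the oscillating sum is zero
  have hlim : Tendsto (fun z : ℂ => g z - Hf z.im) L (nhds 0) := by
    rw [tendsto_zero_iff_norm_tendsto_zero]
    have heq : (fun z : ℂ => ‖g z - Hf z.im‖)
        = fun z : ℂ => ‖f z - partialSumAE n μ ν p j z‖
            * Real.exp (lam j * z.re) := by
      funext z
      rw [hkey z, norm_mul, Complex.norm_exp,
        Complex.re_ofReal_mul]
    rw [heq]
    exact hN j
  have hopen : IsOpen {z : ℂ | 0 < z.re} := isOpen_lt continuous_const Complex.continuous_re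
  have hgdiff : ∀ w : ℂ, 0 < w.re → DifferentiableAt ℂ g w := by
    intro w hw
    have h1 : DifferentiableAt ℂ f w := hf.differentiableAt (hopen.mem_nhds hw)
    exact ((h1.sub (hprev w)).mul (((differentiable_id.const_mul ((lam j : ℂ))).cexp) w))
  -- uniform bound on g for large real part
  obtain ⟨x₀, hx₀⟩ : ∃ x₀ : ℝ, ∀ z : ℂ, x₀ ≤ z.re → ‖g z - Hf z.im‖ ≤ 1 := by
    have h1 : ∀ᶠ z in L, ‖g z - Hf z.im‖ ≤ 1 := by
      have h2 : Tendsto (fun z : ℂ => ‖g z - Hf z.im‖) L (nhds 0) := by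
        simpa using hlim.norm
      exact h2.eventually (eventually_le_nhds one_pos)
    rw [hL, Filter.eventually_comap] at h1
    obtain ⟨x₀, hx₀⟩ := Filter.eventually_atTop.mp h1
    exact ⟨x₀, fun z hz => hx₀ z.re hz z rfl⟩
  set C : ℝ := ∑ k ∈ Finset.range (n j + 1), ‖p j k‖ with hCdef
  have hHfC : ∀ y : ℝ, ‖Hf y‖ ≤ C := by
    intro y
    rw [hHfdef, hCdef]
    refine (norm_sum_le _ _).trans (Finset.sum_le_sum fun k hk => ?_)
    rw [norm_mul, Complex.norm_exp]
    have : (((2 * ν j k : ℝ) : ℂ) * I * (y : ℂ)).re = 0 := by simp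
    rw [this, Real.exp_zero, mul_one]
  set x₁ : ℝ := max x₀ 1 with hx₁def
  have hx₁pos : (0:ℝ) < x₁ := lt_of_lt_of_le one_pos (le_max_right _ _)
  have hM : ∀ z : ℂ, x₁ ≤ z.re → ‖g z‖ ≤ C + 1 := by
    intro z hz
    have h1 : ‖g z - Hf z.im‖ ≤ 1 := hx₀ z ((le_max_left _ _).trans hz)
    have h2 : ‖Hf z.im‖ ≤ C := hHfC z.im
    calc ‖g z‖ = ‖(g z - Hf z.im) + Hf z.im‖ := by ring_nf
      _ ≤ ‖g z - Hf z.im‖ + ‖Hf z.im‖ := norm_add_le _ _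
      _ ≤ C + 1 := by linarith
  -- Cauchy estimate for the derivative
  have hderiv : ∀ z : ℂ, 2 * x₁ ≤ z.re → ‖deriv g z‖ ≤ 2 * (C + 1) / z.re := by
    intro z hz
    have hzre : 0 < z.re := lt_of_lt_of_le (by positivity) hz
    set R : ℝ := z.re / 2 with hRdef
    have hR : 0 < R := by positivity
    have hsub : Metric.closedBall z R ⊆ {w : ℂ | x₁ ≤ w.re} := by
      intro w hw
      have h1 : |(w - z).re| ≤ ‖w - z‖ := by
        exact Complex.abs_re_le_norm _
      have h2 : ‖w - z‖ ≤ R := by rwa [Metric.mem_closedBall, dist_eq_norm] at hw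
      have h3 := (abs_le.mp (h1.trans h2)).1
      rw [Complex.sub_re] at h3
      simp only [Set.mem_setOf_eq]
      have : x₁ ≤ z.re - R := by rw [hRdef]; linarith
      linarith
    have hdOn : ∀ w ∈ Metric.closedBall z R, DifferentiableAt ℂ g w := fun w hw =>
      hgdiff w (lt_of_lt_of_le hx₁pos (hsub hw))
    have hd : DiffContOnCl ℂ g (Metric.ball z R) :=
      ⟨fun w hw => (hdOn w (Metric.ball_subset_closedBall hw)).differentiableWithinAt,
       by rw [closure_ball z hR.ne']
          exact fun w hw => (hdOn w hw).continuousAt.continuousWithinAt⟩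
    have hest := Complex.norm_deriv_le_of_forall_mem_sphere_norm_le hR hd
      (fun w hw => hM w (hsub (Metric.sphere_subset_closedBall hw)))
    calc ‖deriv g z‖ ≤ (C + 1) / R := hest
      _ = 2 * (C + 1) / z.re := by rw [hRdef]; field_simp
  -- limits along horizontal lines
  have hline : ∀ y : ℝ, Tendsto (fun x : ℝ => g ((x:ℂ) + (y:ℂ) * I)) atTop (nhds (Hf y)) := by
    intro y
    have hmap : Tendsto (fun x : ℝ => (x:ℂ) + (y:ℂ) * I) atTop L := by
      rw [hL, tendsto_comap_iff]
      have : (Complex.re ∘ fun x : ℝ => (x:ℂ) + (y:ℂ) * I) = id := by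
        funext x; simp
      rw [this]
      exact tendsto_id
    have h2 := hlim.comp hmap
    have h4 : Tendsto (fun x : ℝ => (g ((x:ℂ) + (y:ℂ) * I)
        - Hf (((x:ℂ) + (y:ℂ) * I).im)) + Hf y) atTop (nhds (0 + Hf y)) :=
      h2.add tendsto_const_nhds
    simpa using h4
  -- Hf is constant
  have hconst : ∀ y : ℝ, Hf y = Hf 0 := by
    intro y
    have h1 : Tendsto (fun x : ℝ => g ((x:ℂ) + (y:ℂ) * I) - g ((x:ℂ) + ((0:ℝ):ℂ) * I))
        atTop (nhds (Hf y - Hf 0)) := (hline y).sub (hline 0)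
    have h2 : Tendsto (fun x : ℝ => g ((x:ℂ) + (y:ℂ) * I) - g ((x:ℂ) + ((0:ℝ):ℂ) * I))
        atTop (nhds 0) := by
      apply squeeze_zero_norm' (a := fun x : ℝ => 2 * (C + 1) * |y| / x)
      · filter_upwards [eventually_ge_atTop (max (2 * x₁) 1)] with x hx
        have hx2 : 2 * x₁ ≤ x := (le_max_left _ _).trans hx
        have hxpos : (0:ℝ) < x := lt_of_lt_of_le one_pos ((le_max_right _ _).trans hx)
        have hconv : Convex ℝ {w : ℂ | x ≤ w.re} := convex_halfSpace_re_ge x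
        have hmem1 : (x:ℂ) + (y:ℂ) * I ∈ {w : ℂ | x ≤ w.re} := by simp
        have hmem0 : (x:ℂ) + ((0:ℝ):ℂ) * I ∈ {w : ℂ | x ≤ w.re} := by simp
        have hdiffS : ∀ w ∈ {w : ℂ | x ≤ w.re}, DifferentiableAt ℂ g w := by
          intro w hw
          exact hgdiff w (lt_of_lt_of_le (by positivity) (le_trans hx2 hw))
        have hbdS : ∀ w ∈ {w : ℂ | x ≤ w.re}, ‖deriv g w‖ ≤ 2 * (C + 1) / x := by
          intro w hw
          have hwre : 2 * x₁ ≤ w.re := le_trans hx2 hw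
          refine (hderiv w hwre).trans ?_
          exact div_le_div_of_nonneg_left (by linarith [hHfC 0, norm_nonneg (Hf 0)]) hxpos hw
        have hmvt := hconv.norm_image_sub_le_of_norm_deriv_le hdiffS hbdS hmem0 hmem1
        have hne : ‖((x:ℂ) + (y:ℂ) * I) - ((x:ℂ) + ((0:ℝ):ℂ) * I)‖ = |y| := by
          have : ((x:ℂ) + (y:ℂ) * I) - ((x:ℂ) + ((0:ℝ):ℂ) * I) = (y:ℂ) * I := by
            push_cast; ring
          rw [this, norm_mul, Complex.norm_I, Complex.norm_real, Real.norm_eq_abs, mul_one]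
        calc ‖g ((x:ℂ) + (y:ℂ) * I) - g ((x:ℂ) + ((0:ℝ):ℂ) * I)‖
            ≤ 2 * (C + 1) / x * ‖((x:ℂ) + (y:ℂ) * I) - ((x:ℂ) + ((0:ℝ):ℂ) * I)‖ := hmvt
          _ = 2 * (C + 1) * |y| / x := by rw [hne]; ring
      · exact tendsto_const_nhds.div_atTop tendsto_id
    have h3 := tendsto_nhds_unique h1 h2
    exact sub_eq_zero.mp h3
  -- Fourier argument: extract the coefficient p j k0
  set a : ℕ → ℝ := fun l => 2 * ν j l - 2 * ν j k0 with hadef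
  have hk0mem : k0 ∈ Finset.range (n j + 1) := Finset.mem_range.mpr (Nat.lt_succ_of_le hk0)
  have haiff : ∀ l ∈ Finset.range (n j + 1), (a l = 0 ↔ l = k0) := by
    intro l hl
    constructor
    · intro hal
      have hνeq : ν j l = ν j k0 := by rw [hadef] at hal; simp at hal; linarith
      have hμeq : μ j l = μ j k0 := by
        obtain ⟨-, -, hs1⟩ := hμν j l (Nat.lt_succ_iff.mp (Finset.mem_range.mp hl))
        obtain ⟨-, -, hs2⟩ := hμν j k0 hk0
        linarith
      exact hinj j (Nat.lt_succ_iff.mp (Finset.mem_range.mp hl)) hk0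
        (by rw [Prod.mk.injEq]; exact ⟨hμeq, hνeq⟩)
    · intro hl'
      rw [hadef, hl']; ring
  have hkey2 : ∀ y : ℝ, ∑ l ∈ Finset.range (n j + 1),
      p j l * Complex.exp ((a l : ℂ) * I * (y:ℂ))
      = Hf 0 * Complex.exp (((-(2 * ν j k0) : ℝ) : ℂ) * I * (y:ℂ)) := by
    intro y
    have h1 : Hf y = Hf 0 := hconst y
    rw [hHfdef] at h1
    simp only at h1
    calc ∑ l ∈ Finset.range (n j + 1), p j l * Complex.exp ((a l : ℂ) * I * (y:ℂ))
        = (∑ l ∈ Finset.range (n j + 1),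
            p j l * Complex.exp (((2 * ν j l : ℝ) : ℂ) * I * (y:ℂ)))
          * Complex.exp (((-(2 * ν j k0) : ℝ) : ℂ) * I * (y:ℂ)) := by
          rw [Finset.sum_mul]
          refine Finset.sum_congr rfl fun l hl => ?_
          conv_rhs => rw [mul_assoc, ← Complex.exp_add]
          congr 2
          rw [hadef]
          push_cast
          ring
      _ = Hf 0 * Complex.exp (((-(2 * ν j k0) : ℝ) : ℂ) * I * (y:ℂ)) := by rw [h1]
  -- integrate the identity
  have hint : ∀ T : ℝ, ∑ l ∈ Finset.range (n j + 1),
      p j l * ((∫ y in (0:ℝ)..T, Complex.exp ((a l : ℂ) * I * y)) / (T:ℂ))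
      = Hf 0 * ((∫ y in (0:ℝ)..T,
          Complex.exp (((-(2 * ν j k0) : ℝ) : ℂ) * I * y)) / (T:ℂ)) := by
    intro T
    have hi : ∀ l ∈ Finset.range (n j + 1), IntervalIntegrable
        (fun y : ℝ => p j l * Complex.exp ((a l : ℂ) * I * y))
        MeasureTheory.volume 0 T := by
      intro l _
      apply Continuous.intervalIntegrable
      fun_prop
    have h2 : (∫ y in (0:ℝ)..T, ∑ l ∈ Finset.range (n j + 1),
        p j l * Complex.exp ((a l : ℂ) * I * y))
        = ∑ l ∈ Finset.range (n j + 1),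
          p j l * ∫ y in (0:ℝ)..T, Complex.exp ((a l : ℂ) * I * y) := by
      rw [intervalIntegral.integral_finset_sum hi]
      exact Finset.sum_congr rfl fun l _ => intervalIntegral.integral_const_mul _ _
    have h3 : (∫ y in (0:ℝ)..T, ∑ l ∈ Finset.range (n j + 1),
        p j l * Complex.exp ((a l : ℂ) * I * y))
        = Hf 0 * ∫ y in (0:ℝ)..T, Complex.exp (((-(2 * ν j k0) : ℝ) : ℂ) * I * y) := by
      rw [intervalIntegral.integral_congr (g := fun y : ℝ =>
        Hf 0 * Complex.exp (((-(2 * ν j k0) : ℝ) : ℂ) * I * y)) (fun y _ => hkey2 y)]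
      exact intervalIntegral.integral_const_mul _ _
    have h4 := h2.symm.trans h3
    calc ∑ l ∈ Finset.range (n j + 1),
        p j l * ((∫ y in (0:ℝ)..T, Complex.exp ((a l : ℂ) * I * y)) / (T:ℂ))
        = (∑ l ∈ Finset.range (n j + 1),
            p j l * ∫ y in (0:ℝ)..T, Complex.exp ((a l : ℂ) * I * y)) / (T:ℂ) := by
          rw [Finset.sum_div]
          exact Finset.sum_congr rfl fun l _ => (mul_div_assoc _ _ _).symm
      _ = (Hf 0 * ∫ y in (0:ℝ)..T,
            Complex.exp (((-(2 * ν j k0) : ℝ) : ℂ) * I * y)) / (T:ℂ) := by rw [h4]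
      _ = Hf 0 * ((∫ y in (0:ℝ)..T,
            Complex.exp (((-(2 * ν j k0) : ℝ) : ℂ) * I * y)) / (T:ℂ)) := mul_div_assoc _ _ _
  -- two limits
  have hA : Tendsto (fun T : ℝ => ∑ l ∈ Finset.range (n j + 1),
      p j l * ((∫ y in (0:ℝ)..T, Complex.exp ((a l : ℂ) * I * y)) / (T:ℂ)))
      atTop (nhds (p j k0)) := by
    have h1 := tendsto_finset_sum (Finset.range (n j + 1))
      (fun l (_ : l ∈ Finset.range (n j + 1)) => (expInt_tendsto (a l)).const_mul (p j l))
    have h2 : ∑ l ∈ Finset.range (n j + 1),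
        p j l * (if a l = 0 then (1:ℂ) else 0) = p j k0 := by
      rw [Finset.sum_congr rfl (fun l hl => by
        rw [if_congr (haiff l hl) rfl rfl, mul_ite, mul_one, mul_zero])]
      rw [Finset.sum_ite_eq' (Finset.range (n j + 1)) k0 (fun l => p j l), if_pos hk0mem]
    rwa [h2] at h1
  have hB : Tendsto (fun T : ℝ => ∑ l ∈ Finset.range (n j + 1),
      p j l * ((∫ y in (0:ℝ)..T, Complex.exp ((a l : ℂ) * I * y)) / (T:ℂ)))
      atTop (nhds 0) := by
    have h1 : Tendsto (fun T : ℝ => Hf 0 * ((∫ y in (0:ℝ)..T,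
        Complex.exp (((-(2 * ν j k0) : ℝ) : ℂ) * I * y)) / (T:ℂ))) atTop
        (nhds (Hf 0 * (if (-(2 * ν j k0) : ℝ) = 0 then 1 else 0))) :=
      (expInt_tendsto _).const_mul (Hf 0)
    have hne : (-(2 * ν j k0) : ℝ) ≠ 0 := by
      simp only [ne_eq, neg_eq_zero, mul_eq_zero]
      push_neg
      exact ⟨by norm_num, hν0⟩
    rw [if_neg hne, mul_zero] at h1
    exact Tendsto.congr (fun T => (hint T).symm) h1
  exact hp0 (tendsto_nhds_unique hA hB)
end

section
/- Let f be a bounded holomorphic function on the right half-plane H with asymptotic expansion ∑_{j=0}^∞ c_j e^{-λ_j z}, and set f_n(z) = f(z) - ∑_{j=0}^n c_j e^{-λ_j z}. Then |f_n(z)| ≤ M_n e^{-λ_{n+1} Re z} on H, where M_n is the supremum of the non-tangential boundary values |f_n*(iy)| over y ∈ ℝ. -/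
open Filter Complex

section Aux
open Complex Filter Metric Set MeasureTheory intervalIntegral

lemma psi_re (z₀ v : ℂ) (hv : v ≠ 1) :
    ((z₀ + (starRingEnd ℂ) z₀ * v) / (1 - v)).re
      = z₀.re * (1 - Complex.normSq v) / Complex.normSq (1 - v) := by
  have h : Complex.normSq (1 - v) ≠ 0 := by
    simp [Complex.normSq_eq_zero, sub_eq_zero]
    exact fun h' => hv h'.symm
  rw [Complex.div_re]
  simp only [Complex.normSq_apply, Complex.add_re, Complex.add_im, Complex.mul_re, Complex.mul_im,
    Complex.conj_re, Complex.conj_im, Complex.sub_re, Complex.sub_im, Complex.one_re, Complex.one_im]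
  field_simp
  ring

lemma psi_diff (z₀ w : ℂ) (r : ℝ) (h1 : 1 - (r:ℂ)*w ≠ 0) (h2 : 1 - w ≠ 0) :
    (z₀ + (starRingEnd ℂ) z₀ * ((r:ℂ)*w)) / (1 - (r:ℂ)*w) - (z₀ + (starRingEnd ℂ) z₀ * w) / (1 - w)
      = -((1-(r:ℂ))*w*(z₀ + (starRingEnd ℂ) z₀))/((1-(r:ℂ)*w)*(1-w)) := by
  set c := (starRingEnd ℂ) z₀
  field_simp
  ring

-- mean value inequality on circles
lemma mean_value_ineq (G : ℂ → ℂ) (hG : DifferentiableOn ℂ G (ball (0:ℂ) 1))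
    {r : ℝ} (hr0 : 0 < r) (hr1 : r < 1) :
    ‖G 0‖ ≤ (2*Real.pi)⁻¹ * ∫ θ in (0:ℝ)..2*Real.pi, ‖G (circleMap 0 r θ)‖ := by
  have hsub : closedBall (0:ℂ) r ⊆ ball 0 1 := closedBall_subset_ball hr1
  have hd : DiffContOnCl ℂ G (ball (0:ℂ) r) := by
    apply DifferentiableOn.diffContOnCl
    refine hG.mono ?_
    rw [closure_ball (0:ℂ) hr0.ne']
    exact hsub
  have hint : (∮ z in C(0, r), (z - 0)⁻¹ • G z) = (2 * Real.pi * Complex.I : ℂ) • G 0 :=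
    hd.circleIntegral_sub_inv_smul (mem_ball_self hr0)
  have hre : (∮ z in C(0, r), (z - 0)⁻¹ • G z)
      = ∫ θ in (0:ℝ)..2*Real.pi, Complex.I * G (circleMap 0 r θ) := by
    rw [circleIntegral]
    congr 1
    ext θ
    have hne : circleMap 0 r θ ≠ 0 := circleMap_ne_center hr0.ne'
    rw [deriv_circleMap]
    simp only [smul_eq_mul, sub_zero]
    field_simp
  have h2pi : (0:ℝ) < 2*Real.pi := by positivity
  have hnorm : (2*Real.pi) * ‖G 0‖
      ≤ ∫ θ in (0:ℝ)..2*Real.pi, ‖G (circleMap 0 r θ)‖ := by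
    have h1 : ‖(2 * Real.pi * Complex.I : ℂ) • G 0‖ = (2*Real.pi) * ‖G 0‖ := by
      simp [norm_smul, abs_of_pos h2pi]
      left; exact Real.pi_nonneg
    calc (2*Real.pi) * ‖G 0‖ = ‖(2 * Real.pi * Complex.I : ℂ) • G 0‖ := h1.symm
      _ = ‖∫ θ in (0:ℝ)..2*Real.pi, Complex.I * G (circleMap 0 r θ)‖ := by rw [← hint, hre]
      _ ≤ ∫ θ in (0:ℝ)..2*Real.pi, ‖Complex.I * G (circleMap 0 r θ)‖ :=
          intervalIntegral.norm_integral_le_integral_norm h2pi.le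
      _ = ∫ θ in (0:ℝ)..2*Real.pi, ‖G (circleMap 0 r θ)‖ := by
          congr 1; ext θ; simp [norm_mul]
  calc ‖G 0‖ = (2*Real.pi)⁻¹ * ((2*Real.pi) * ‖G 0‖) := by
        field_simp
    _ ≤ (2*Real.pi)⁻¹ * ∫ θ in (0:ℝ)..2*Real.pi, ‖G (circleMap 0 r θ)‖ := by
        apply mul_le_mul_of_nonneg_left hnorm (by positivity)

lemma arith (x₀ ρ a b : ℝ) (hx : 0 < x₀) (h1 : ρ < 1) (ha : 0 < a) (hb : 0 < b)
    (hab : a < (1+ρ)*b) : (1-ρ)*(2*x₀)/(a*b) < 2*(x₀*(1-ρ^2)/a^2) := by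
  have h2 : 2*(x₀*(1-ρ^2)/a^2) = (2*x₀*(1-ρ^2))/(a^2) := by ring
  rw [h2, div_lt_div_iff₀ (by positivity) (by positivity)]
  nlinarith [mul_pos (mul_pos (mul_pos hx (sub_pos.2 h1)) ha) (sub_pos.2 hab)]


lemma halfplane_max (g : ℂ → ℂ) (B M : ℝ) (hM : 0 ≤ M)
    (hg : DifferentiableOn ℂ g {z : ℂ | 0 < z.re})
    (hB : ∀ z : ℂ, 0 < z.re → ‖g z‖ ≤ B)
    (hbd : ∀ y : ℝ, ∃ L : ℂ, ‖L‖ ≤ M ∧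
      Filter.Tendsto g (nhdsWithin ((y:ℂ) * Complex.I)
        {z : ℂ | 0 < z.re ∧ ‖z - (y:ℂ)*Complex.I‖ < 2*z.re}) (nhds L))
    (z₀ : ℂ) (hz₀ : 0 < z₀.re) : ‖g z₀‖ ≤ M := by
  set c := (starRingEnd ℂ) z₀ with hc
  set ψ : ℂ → ℂ := fun w => (z₀ + c * w) / (1 - w) with hψ
  have hden : ∀ w : ℂ, w ∈ ball (0:ℂ) 1 → (1:ℂ) - w ≠ 0 := by
    intro w hw
    rw [sub_ne_zero]
    intro h
    rw [mem_ball, dist_zero_right, ← h] at hw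
    simp at hw
  have hψre : ∀ w : ℂ, w ∈ ball (0:ℂ) 1 → 0 < (ψ w).re := by
    intro w hw
    have hw1 : w ≠ 1 := fun h => hden w hw (by rw [h]; ring)
    rw [hψ]
    simp only
    rw [psi_re z₀ w hw1]
    have h1 : Complex.normSq w < 1 := by
      have := mem_ball_zero_iff.1 hw
      rw [Complex.normSq_eq_norm_sq]
      calc ‖w‖ ^ 2 < 1^2 := by
            apply pow_lt_pow_left₀ (by exact this) (norm_nonneg w)
            norm_num
        _ = 1 := one_pow 2
    have h2 : 0 < Complex.normSq (1 - w) := by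
      rw [Complex.normSq_pos]
      exact hden w hw
    have h3 : 0 < 1 - Complex.normSq w := by linarith
    positivity
  have hψdiff : DifferentiableOn ℂ ψ (ball (0:ℂ) 1) := by
    apply DifferentiableOn.div
    · exact (differentiable_const _).differentiableOn.add
        ((differentiable_const _).mul differentiable_id).differentiableOn
    · exact ((differentiable_const _).sub differentiable_id).differentiableOn
    · exact hden
  set G : ℂ → ℂ := fun w => g (ψ w) with hG
  have hGdiff : DifferentiableOn ℂ G (ball (0:ℂ) 1) := by
    apply DifferentiableOn.comp hg hψdiff
    intro w hw
    exact hψre w hw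
  have hGcont : ContinuousOn G (ball (0:ℂ) 1) := hGdiff.continuousOn
  have hGb : ∀ w : ℂ, w ∈ ball (0:ℂ) 1 → ‖G w‖ ≤ B :=
    fun w hw => hB (ψ w) (hψre w hw)
  have hψ0 : ψ 0 = z₀ := by rw [hψ]; simp
  -- the radii sequence
  set r : ℕ → ℝ := fun n => 1 - 1/(n+2 : ℝ) with hr
  have hr01 : ∀ n, 0 < r n ∧ r n < 1 := by
    intro n
    constructor
    · rw [hr]; simp only
      have h1 : 1/(n+2:ℝ) ≤ 1/2 := by
        apply one_div_le_one_div_of_le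
        · norm_num
        · push_cast; linarith [Nat.cast_nonneg (α := ℝ) n]
      linarith
    · rw [hr]; simp only
      have : 0 < 1/(n+2:ℝ) := by positivity
      linarith
  have hrt : Filter.Tendsto r Filter.atTop (nhdsWithin (1:ℝ) (Set.Iio 1)) := by
    apply tendsto_nhdsWithin_of_tendsto_nhds_of_eventually_within
    · rw [hr]
      have : Filter.Tendsto (fun n : ℕ => 1/(n+2:ℝ)) Filter.atTop (nhds 0) := by
        apply Filter.Tendsto.div_atTop (tendsto_const_nhds)
        exact tendsto_atTop_add_const_right _ 2 tendsto_natCast_atTop_atTop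
      have h2 := (tendsto_const_nhds (x := (1:ℝ)) (f := Filter.atTop (α := ℕ))).sub this
      simpa using h2
    · filter_upwards with n
      exact (hr01 n).2
  -- boundary limit function
  set l : ℝ → ℝ := fun θ =>
    ‖Classical.choose (hbd ((ψ (Complex.exp ((θ:ℂ) * Complex.I))).im))‖ with hl
  have hlM : ∀ θ, l θ ≤ M := fun θ => (Classical.choose_spec (hbd _)).1
  have hpt : ∀ θ : ℝ, θ ∈ Set.Ioo (0:ℝ) (2*Real.pi) →
      Filter.Tendsto (fun n => ‖G (circleMap 0 (r n) θ)‖) Filter.atTop (nhds (l θ)) := by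
    intro θ hθ
    set w : ℂ := Complex.exp ((θ:ℂ) * Complex.I) with hw
    have hw1 : w ≠ 1 := by
      rw [hw]
      intro h
      rw [Complex.exp_eq_one_iff] at h
      obtain ⟨n, hn⟩ := h
      have hn2 : (θ:ℂ) * Complex.I = ((n * (2*Real.pi) : ℝ) : ℂ) * Complex.I := by
        rw [hn]; push_cast; ring
      have hθeq : θ = (n:ℝ) * (2*Real.pi) := by
        have := mul_right_cancel₀ Complex.I_ne_zero hn2
        exact_mod_cast this
      have hθ1 := hθ.1; have hθ2 := hθ.2
      have hπ := Real.pi_pos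
      rcases le_or_gt n 0 with h' | h'
      · have : (n:ℝ) ≤ 0 := by exact_mod_cast h'
        nlinarith
      · have : (1:ℝ) ≤ (n:ℝ) := by exact_mod_cast h'
        nlinarith
    have h1w : (1:ℂ) - w ≠ 0 := sub_ne_zero.2 (Ne.symm hw1)
    have habsw : ‖w‖ = 1 := by rw [hw]; exact Complex.norm_exp_ofReal_mul_I θ
    have hnsqw : Complex.normSq w = 1 := by
      rw [Complex.normSq_eq_norm_sq, habsw]; norm_num
    have hwre : (ψ w).re = 0 := by
      rw [hψ]; simp only; rw [psi_re z₀ w hw1, hnsqw]; ring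
    set Y : ℝ := (ψ w).im with hY
    have hYI : ((Y:ℂ)) * Complex.I = ψ w := by
      apply Complex.ext
      · simp [hwre]
      · simp [hY]
    set L : ℂ := Classical.choose (hbd Y) with hL
    have hLspec := Classical.choose_spec (hbd Y)
    have hLt := hLspec.2
    -- continuity of the radial path
    have hcont : Filter.Tendsto (fun ρ : ℝ => ψ ((ρ:ℂ)*w)) (nhds 1) (nhds (ψ w)) := by
      have : ContinuousAt (fun ρ : ℝ => ψ ((ρ:ℂ)*w)) 1 := by
        rw [hψ]
        simp only
        apply ContinuousAt.div
        · fun_prop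
        · fun_prop
        · simpa using h1w
      have := this.tendsto
      simpa using this
    -- eventual strict inequality
    have hb0 : 0 < ‖1-w‖ := norm_pos_iff.2 h1w
    have hev2 : ∀ᶠ ρ : ℝ in nhds (1:ℝ), ‖1 - (ρ:ℂ)*w‖ < (1+ρ)*‖1-w‖ := by
      have hc1 : ContinuousAt (fun ρ:ℝ => ‖1 - (ρ:ℂ)*w‖) 1 :=
        continuous_norm.continuousAt.comp (by fun_prop)
      have hc2 : ContinuousAt (fun ρ:ℝ => (1+ρ)*‖1-w‖) 1 := by fun_prop
      apply hc1.eventually_lt hc2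
      simp only [Complex.ofReal_one, one_mul]
      linarith
    have hev0 : ∀ᶠ ρ in nhds (1:ℝ), (0:ℝ) < ρ := eventually_gt_nhds (by norm_num)
    have hmem : ∀ᶠ ρ : ℝ in nhdsWithin (1:ℝ) (Set.Iio 1), ψ ((ρ:ℂ)*w) ∈
        {z : ℂ | 0 < z.re ∧ ‖z - (Y:ℂ)*Complex.I‖ < 2*z.re} := by
      filter_upwards [nhdsWithin_le_nhds hev2, nhdsWithin_le_nhds hev0,
        self_mem_nhdsWithin] with ρ hρab hρ0 hρ1
      have hρ1' : ρ < 1 := hρ1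
      have hρballmem : (ρ:ℂ)*w ∈ ball (0:ℂ) 1 := by
        rw [mem_ball_zero_iff]
        rw [norm_mul, habsw, Complex.norm_real, Real.norm_eq_abs, abs_of_pos hρ0]
        simpa using hρ1'
      have hρw1 : (ρ:ℂ)*w ≠ 1 := fun h => hden _ hρballmem (by rw [h]; ring)
      have h1ρw : (1:ℂ) - (ρ:ℂ)*w ≠ 0 := sub_ne_zero.2 (Ne.symm hρw1)
      have ha0 : 0 < ‖1-(ρ:ℂ)*w‖ := norm_pos_iff.2 h1ρw
      constructor
      · exact hψre _ hρballmem
      · rw [hYI]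
        have hdiffeq : ψ ((ρ:ℂ)*w) - ψ w
            = -((1-(ρ:ℂ))*w*(z₀ + c))/((1-(ρ:ℂ)*w)*(1-w)) := by
          rw [hψ]; simp only; exact psi_diff z₀ w ρ h1ρw h1w
        have habs_diff : ‖ψ ((ρ:ℂ)*w) - ψ w‖
            = (1-ρ) * (2*z₀.re) / (‖1-(ρ:ℂ)*w‖ * ‖1-w‖) := by
          rw [hdiffeq]
          rw [norm_div]
          rw [norm_neg]
          rw [norm_mul, norm_mul, norm_mul]
          have e1 : (1:ℂ) - (ρ:ℂ) = ((1-ρ:ℝ):ℂ) := by push_cast; ring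
          have e2 : z₀ + c = ((2*z₀.re:ℝ):ℂ) := by
            rw [hc]; exact Complex.add_conj z₀
          rw [e1, e2, Complex.norm_real, Real.norm_eq_abs, Complex.norm_real, Real.norm_eq_abs, habsw]
          rw [abs_of_pos (by linarith : (0:ℝ) < 1-ρ), abs_of_pos (by linarith : (0:ℝ) < 2*z₀.re)]
          ring
        have hre_eq : (ψ ((ρ:ℂ)*w)).re
            = z₀.re * (1 - ρ^2) / (‖1-(ρ:ℂ)*w‖)^2 := by
          rw [hψ]; simp only; rw [psi_re z₀ _ hρw1]
          congr 1
          · congr 1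
            rw [Complex.normSq_eq_norm_sq, norm_mul, habsw, Complex.norm_real, Real.norm_eq_abs,
              abs_of_pos hρ0]
            ring
          · rw [Complex.normSq_eq_norm_sq]
        rw [habs_diff, hre_eq]
        exact arith z₀.re ρ _ _ hz₀ hρ1' ha0 hb0 hρab
    have hpath : Filter.Tendsto (fun ρ:ℝ => ψ ((ρ:ℂ)*w)) (nhdsWithin (1:ℝ) (Set.Iio 1))
        (nhdsWithin ((Y:ℂ)*Complex.I)
          {z : ℂ | 0 < z.re ∧ ‖z - (Y:ℂ)*Complex.I‖ < 2*z.re}) := by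
      rw [tendsto_nhdsWithin_iff]
      constructor
      · rw [hYI]
        exact hcont.mono_left nhdsWithin_le_nhds
      · exact hmem
    have hcomp : Filter.Tendsto (fun n => g (ψ ((r n : ℂ)*w))) Filter.atTop (nhds L) :=
      hLt.comp (hpath.comp hrt)
    have hcm : ∀ n, circleMap 0 (r n) θ = ((r n : ℂ))*w := by
      intro n
      rw [circleMap_zero, hw]
    have : Filter.Tendsto (fun n => ‖g (ψ ((r n : ℂ)*w))‖) Filter.atTop
        (nhds (‖L‖)) := (continuous_norm.tendsto L).comp hcomp
    convert this using 2 with n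
    · rw [hG]; simp only; rw [hcm n]
  -- dominated convergence
  have h2pi : (0:ℝ) < 2*Real.pi := by positivity
  have hmemball : ∀ (n : ℕ) (θ : ℝ), circleMap 0 (r n) θ ∈ ball (0:ℂ) 1 := by
    intro n θ
    rw [mem_ball_zero_iff, norm_circleMap_zero, abs_of_pos (hr01 n).1]
    exact (hr01 n).2
  have hFc : ∀ n : ℕ, Continuous (fun θ => ‖G (circleMap 0 (r n) θ)‖) := by
    intro n
    apply continuous_norm.comp
    apply hGcont.comp_continuous (continuous_circleMap 0 (r n))
    exact hmemball n
  have hDCT : Filter.Tendsto (fun n => ∫ θ in (0:ℝ)..2*Real.pi, ‖G (circleMap 0 (r n) θ)‖)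
      Filter.atTop (nhds (∫ θ in (0:ℝ)..2*Real.pi, l θ)) := by
    apply intervalIntegral.tendsto_integral_filter_of_dominated_convergence (fun _ => B)
    · filter_upwards with n
      exact ((hFc n).aestronglyMeasurable).restrict
    · filter_upwards with n
      filter_upwards with θ _
      rw [Real.norm_eq_abs, _root_.abs_of_nonneg (norm_nonneg _)]
      exact hGb _ (hmemball n θ)
    · exact intervalIntegrable_const
    · have hae2 : ∀ᵐ (θ:ℝ), θ ≠ 2*Real.pi := by
        rw [MeasureTheory.ae_iff]
        simp only [ne_eq, not_not]
        have : {θ : ℝ | θ = 2*Real.pi} = {2*Real.pi} := by ext x; simp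
        rw [this]
        exact Real.volume_singleton
      filter_upwards [hae2] with θ hθne hθmem
      rw [Set.uIoc_of_le h2pi.le] at hθmem
      exact hpt θ ⟨hθmem.1, lt_of_le_of_ne hθmem.2 hθne⟩
  have hmean : ∀ n : ℕ, ‖G 0‖
      ≤ (2*Real.pi)⁻¹ * ∫ θ in (0:ℝ)..2*Real.pi, ‖G (circleMap 0 (r n) θ)‖ :=
    fun n => mean_value_ineq G hGdiff (hr01 n).1 (hr01 n).2
  have hG0 : ‖G 0‖ ≤ (2*Real.pi)⁻¹ * ∫ θ in (0:ℝ)..2*Real.pi, l θ := by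
    apply ge_of_tendsto' (hDCT.const_mul (2*Real.pi)⁻¹) hmean
  have hae2' : ∀ᵐ θ ∂(MeasureTheory.volume.restrict (Set.uIoc (0:ℝ) (2*Real.pi))),
      Filter.Tendsto (fun n => ‖G (circleMap 0 (r n) θ)‖) Filter.atTop (nhds (l θ)) := by
    have hae2 : ∀ᵐ (θ:ℝ), θ ≠ 2*Real.pi := by
      rw [MeasureTheory.ae_iff]
      simp only [ne_eq, not_not]
      have : {θ : ℝ | θ = 2*Real.pi} = {2*Real.pi} := by ext x; simp
      rw [this]
      exact Real.volume_singleton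
    rw [MeasureTheory.ae_restrict_iff' measurableSet_uIoc]
    filter_upwards [hae2] with θ hθne hθmem
    rw [Set.uIoc_of_le h2pi.le] at hθmem
    exact hpt θ ⟨hθmem.1, lt_of_le_of_ne hθmem.2 hθne⟩
  have hlint : IntervalIntegrable l MeasureTheory.volume 0 (2*Real.pi) := by
    rw [intervalIntegrable_iff]
    have hlmeas : MeasureTheory.AEStronglyMeasurable l
        (MeasureTheory.volume.restrict (Set.uIoc (0:ℝ) (2*Real.pi))) :=
      aestronglyMeasurable_of_tendsto_ae Filter.atTop
        (fun n => ((hFc n).aestronglyMeasurable).restrict) hae2'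
    apply MeasureTheory.Integrable.mono'
      (g := fun _ => M) ?_ hlmeas ?_
    · exact intervalIntegrable_iff.mp (_root_.intervalIntegrable_const (c := M))
    · filter_upwards with θ
      rw [Real.norm_eq_abs, _root_.abs_of_nonneg (norm_nonneg _)]
      exact hlM θ
  have hintle : (∫ θ in (0:ℝ)..2*Real.pi, l θ) ≤ 2*Real.pi*M := by
    calc (∫ θ in (0:ℝ)..2*Real.pi, l θ) ≤ ∫ _ in (0:ℝ)..2*Real.pi, M := by
          apply intervalIntegral.integral_mono_on h2pi.le hlint intervalIntegrable_const
          intro x _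
          exact hlM x
      _ = 2*Real.pi*M := by rw [intervalIntegral.integral_const, smul_eq_mul]; ring
  have : ‖G 0‖ ≤ M := by
    calc ‖G 0‖ ≤ (2*Real.pi)⁻¹ * ∫ θ in (0:ℝ)..2*Real.pi, l θ := hG0
      _ ≤ (2*Real.pi)⁻¹ * (2*Real.pi*M) := by
          apply mul_le_mul_of_nonneg_left hintle (by positivity)
      _ = M := by field_simp
  have hG0eq : G 0 = g z₀ := by
    rw [hG]
    show g (ψ 0) = g z₀
    rw [hψ0]
  rwa [hG0eq] at this

end Aux

/-- `∑_j c j e^{-lam j z}` is an asymptotic expansion of `f` on the right half-plane,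
for a strictly increasing sequence of levels `0 = lam 0 < lam 1 < ⋯ → ∞`. -/
def HasHolAsymExp (f : ℂ → ℂ) (lam : ℕ → ℝ) (c : ℕ → ℂ) : Prop :=
  lam 0 = 0 ∧ StrictMono lam ∧ Filter.Tendsto lam Filter.atTop Filter.atTop ∧
    ∀ N : ℕ, Filter.Tendsto
      (fun z : ℂ => ‖f z - ∑ j ∈ Finset.range (N + 1), c j * Complex.exp (-(lam j : ℂ) * z)‖ *
        Real.exp (lam N * z.re))
      (Filter.comap Complex.re Filter.atTop) (nhds 0)

/-- **Estimate of the remainders of an asymptotic expansion.** If `f` is bounded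
holomorphic on `H = {Re z > 0}` with asymptotic expansion `∑ c j e^{-lam j z}`, and
`fstar N y` is the non-tangential boundary value at `i y` of the remainder
`f_N(z) = f(z) - ∑_{j ≤ N} c j e^{-lam j z}`, then
`|f_N(z)| ≤ (⨆ y, |fstar N y|) · e^{-lam (N+1) Re z}` on `H`. -/
theorem stmt_4 (f : ℂ → ℂ) (lam : ℕ → ℝ) (c : ℕ → ℂ) (fstar : ℕ → ℝ → ℂ)
    (hf : DifferentiableOn ℂ f {z : ℂ | 0 < z.re})
    (hbdd : ∃ C : ℝ, ∀ z : ℂ, 0 < z.re → ‖f z‖ ≤ C)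
    (hae : HasHolAsymExp f lam c)
    (hstar : ∀ N : ℕ, ∀ y : ℝ, ∀ κ : ℝ, 1 < κ →
      Filter.Tendsto
        (fun z : ℂ => f z - ∑ j ∈ Finset.range (N + 1), c j * Complex.exp (-(lam j : ℂ) * z))
        (nhdsWithin ((y : ℂ) * Complex.I)
          {z : ℂ | 0 < z.re ∧ ‖z - (y : ℂ) * Complex.I‖ < κ * z.re})
        (nhds (fstar N y))) :
    ∀ N : ℕ, ∀ z : ℂ, 0 < z.re →
      ‖f z - ∑ j ∈ Finset.range (N + 1), c j * Complex.exp (-(lam j : ℂ) * z)‖ ≤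
        (⨆ y : ℝ, ‖fstar N y‖) * Real.exp (-lam (N + 1) * z.re) := by
  obtain ⟨C, hC⟩ := hbdd
  obtain ⟨hlam0, hmono, -, hexp⟩ := hae
  have hlamnn : ∀ j, 0 ≤ lam j := fun j => hlam0 ▸ hmono.monotone (Nat.zero_le j)
  intro N z hz
  set lN : ℝ := lam (N+1) with hlN
  have hlNpos : 0 ≤ lN := hlamnn (N+1)
  set F : ℂ → ℂ := fun z => f z - ∑ j ∈ Finset.range (N + 1), c j * Complex.exp (-(lam j : ℂ) * z)
    with hF
  set B₀ : ℝ := C + ∑ j ∈ Finset.range (N + 1), ‖c j‖ with hB₀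
  -- |exp(-(lam j) z)| ≤ 1 on H
  have hexpabs : ∀ (j : ℕ) (w : ℂ), ‖Complex.exp (-(lam j : ℂ) * w)‖
      = Real.exp (-(lam j * w.re)) := by
    intro j w
    rw [Complex.norm_exp]
    congr 1
    simp [Complex.mul_re]
  have hF0 : ∀ w : ℂ, 0 < w.re → ‖F w‖ ≤ B₀ := by
    intro w hw
    rw [hF]
    calc ‖f w - ∑ j ∈ Finset.range (N + 1), c j * Complex.exp (-(lam j : ℂ) * w)‖
        ≤ ‖f w‖ + ‖∑ j ∈ Finset.range (N + 1), c j * Complex.exp (-(lam j : ℂ) * w)‖ := by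
          exact (norm_sub_le _ _)
      _ ≤ C + ∑ j ∈ Finset.range (N + 1), ‖c j‖ := by
          apply add_le_add (hC w hw)
          calc ‖∑ j ∈ Finset.range (N + 1), c j * Complex.exp (-(lam j : ℂ) * w)‖
              ≤ ∑ j ∈ Finset.range (N + 1), ‖c j * Complex.exp (-(lam j : ℂ) * w)‖ :=
                norm_sum_le _ _
            _ ≤ ∑ j ∈ Finset.range (N + 1), ‖c j‖ := by
                apply Finset.sum_le_sum
                intro j _
                rw [norm_mul, hexpabs j w]
                calc ‖c j‖ * Real.exp (-(lam j * w.re))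
                    ≤ ‖c j‖ * 1 := by
                      apply mul_le_mul_of_nonneg_left _ (norm_nonneg _)
                      rw [Real.exp_le_one_iff]
                      have := mul_nonneg (hlamnn j) hw.le
                      linarith
                  _ = ‖c j‖ := mul_one _
  -- extract R from the (N+1)-st asymptotic estimate
  have h1 : ∀ᶠ w : ℂ in Filter.comap Complex.re Filter.atTop,
      ‖f w - ∑ j ∈ Finset.range (N + 2), c j * Complex.exp (-(lam j : ℂ) * w)‖ *
        Real.exp (lam (N+1) * w.re) < 1 := by
    have h := hexp (N+1)
    exact h.eventually_lt_const one_pos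
  rw [Filter.eventually_comap] at h1
  rw [Filter.eventually_atTop] at h1
  obtain ⟨R, hR⟩ := h1
  -- the auxiliary function g
  set g : ℂ → ℂ := fun w => F w * Complex.exp ((lN : ℂ) * w) with hg
  have hgabs : ∀ w : ℂ, ‖g w‖ = ‖F w‖ * Real.exp (lN * w.re) := by
    intro w
    rw [hg]
    simp only
    rw [norm_mul, Complex.norm_exp]
    congr 2
    simp [Complex.mul_re]
  set B : ℝ := max (B₀ * Real.exp (lN * R)) (1 + ‖c (N+1)‖) with hB
  have hgB : ∀ w : ℂ, 0 < w.re → ‖g w‖ ≤ B := by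
    intro w hw
    rcases le_or_gt R w.re with hcase | hcase
    · -- far: use the asymptotic estimate
      have hkey := hR w.re hcase w rfl
      have hsplit : F w = (f w - ∑ j ∈ Finset.range (N + 2), c j * Complex.exp (-(lam j : ℂ) * w))
          + c (N+1) * Complex.exp (-(lN : ℂ) * w) := by
        rw [hF, hlN, Finset.sum_range_succ]
        ring
      rw [hgabs, hsplit]
      calc ‖(f w - ∑ j ∈ Finset.range (N + 2), c j * Complex.exp (-(lam j : ℂ) * w))
              + c (N+1) * Complex.exp (-(lN : ℂ) * w)‖ * Real.exp (lN * w.re)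
          ≤ (‖f w - ∑ j ∈ Finset.range (N + 2), c j * Complex.exp (-(lam j : ℂ) * w)‖
              + ‖c (N+1)‖ * Real.exp (-(lN * w.re))) * Real.exp (lN * w.re) := by
            apply mul_le_mul_of_nonneg_right _ (Real.exp_pos _).le
            calc ‖_‖ ≤ ‖f w - ∑ j ∈ Finset.range (N + 2), c j * Complex.exp (-(lam j : ℂ) * w)‖
                + ‖c (N+1) * Complex.exp (-(lN : ℂ) * w)‖ := norm_add_le _ _
              _ = _ := by rw [norm_mul, hexpabs (N+1) w, ← hlN]
        _ = ‖f w - ∑ j ∈ Finset.range (N + 2), c j * Complex.exp (-(lam j : ℂ) * w)‖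
              * Real.exp (lN * w.re) + ‖c (N+1)‖ * (Real.exp (-(lN * w.re)) * Real.exp (lN * w.re)) := by
            ring
        _ ≤ 1 + ‖c (N+1)‖ * 1 := by
            apply add_le_add hkey.le
            apply mul_le_mul_of_nonneg_left _ (norm_nonneg _)
            rw [← Real.exp_add]
            simp
        _ ≤ B := by rw [hB]; simp
    · -- near: crude bound
      rw [hgabs]
      calc ‖F w‖ * Real.exp (lN * w.re) ≤ B₀ * Real.exp (lN * R) := by
            apply mul_le_mul (hF0 w hw) _ (Real.exp_pos _).le
              (le_trans (norm_nonneg _) (hF0 w hw))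
            rw [Real.exp_le_exp]
            exact mul_le_mul_of_nonneg_left hcase.le hlNpos
        _ ≤ B := le_max_left _ _
  -- differentiability of g
  have hFdiff : DifferentiableOn ℂ F {w : ℂ | 0 < w.re} := by
    rw [hF]
    apply DifferentiableOn.sub hf
    apply Differentiable.differentiableOn
    apply Differentiable.fun_sum
    intro j _
    apply Differentiable.mul (differentiable_const _)
    apply Differentiable.cexp
    apply Differentiable.mul (differentiable_const _) differentiable_id
  have hgdiff : DifferentiableOn ℂ g {w : ℂ | 0 < w.re} := by
    rw [hg]
    apply DifferentiableOn.mul hFdiff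
    apply Differentiable.differentiableOn
    apply Differentiable.cexp
    apply Differentiable.mul (differentiable_const _) differentiable_id
  -- boundary quantities
  set M : ℝ := ⨆ y : ℝ, ‖fstar N y‖ with hM
  have hcone_nebot : ∀ y : ℝ, (nhdsWithin ((y:ℂ) * Complex.I)
      {w : ℂ | 0 < w.re ∧ ‖w - (y:ℂ)*Complex.I‖ < 2*w.re}).NeBot := by
    intro y
    rw [← mem_closure_iff_nhdsWithin_neBot]
    have htd0 : Filter.Tendsto (fun t : ℝ => (y:ℂ)*Complex.I + (t:ℂ))
        (nhdsWithin (0:ℝ) (Set.Ioi 0)) (nhds ((y:ℂ)*Complex.I)) := by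
      have hc : Continuous (fun t : ℝ => (y:ℂ)*Complex.I + (t:ℂ)) := by fun_prop
      have := hc.tendsto 0
      simp only [Complex.ofReal_zero, add_zero] at this
      exact this.mono_left nhdsWithin_le_nhds
    apply mem_closure_of_tendsto htd0
    filter_upwards [self_mem_nhdsWithin] with t ht
    have ht' : (0:ℝ) < t := ht
    constructor
    · simp [ht']
    · have heq : (y:ℂ)*Complex.I + (t:ℂ) - (y:ℂ)*Complex.I = (t:ℂ) := by ring
      rw [heq]
      simp only [Complex.norm_real, Real.norm_eq_abs, Complex.add_re]
      rw [_root_.abs_of_pos ht']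
      have hre : ((y:ℂ)*Complex.I).re = 0 := by simp
      rw [hre]
      simp only [Complex.ofReal_re, zero_add]
      linarith
  have hfsb : ∀ y : ℝ, ‖fstar N y‖ ≤ B₀ := by
    intro y
    have htd := hstar N y 2 one_lt_two
    have habs : Filter.Tendsto (fun w => ‖F w‖)
        (nhdsWithin ((y:ℂ) * Complex.I)
          {w : ℂ | 0 < w.re ∧ ‖w - (y:ℂ)*Complex.I‖ < 2*w.re})
        (nhds (‖fstar N y‖)) :=
      (continuous_norm.tendsto _).comp htd
    haveI := hcone_nebot y
    apply le_of_tendsto habs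
    filter_upwards [self_mem_nhdsWithin] with w hw
    exact hF0 w hw.1
  have hBdd : BddAbove (Set.range fun y : ℝ => ‖fstar N y‖) := by
    refine ⟨B₀, ?_⟩
    rintro x ⟨y, rfl⟩
    exact hfsb y
  have hMy : ∀ y : ℝ, ‖fstar N y‖ ≤ M := fun y => le_ciSup hBdd y
  have hM0 : 0 ≤ M := le_trans (norm_nonneg _) (hMy 0)
  -- boundary limits of g
  have hbd : ∀ y : ℝ, ∃ L : ℂ, ‖L‖ ≤ M ∧
      Filter.Tendsto g (nhdsWithin ((y:ℂ) * Complex.I)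
        {w : ℂ | 0 < w.re ∧ ‖w - (y:ℂ)*Complex.I‖ < 2*w.re}) (nhds L) := by
    intro y
    refine ⟨fstar N y * Complex.exp ((lN : ℂ) * ((y:ℂ)*Complex.I)), ?_, ?_⟩
    · rw [norm_mul, Complex.norm_exp]
      have : ((lN : ℂ) * ((y:ℂ)*Complex.I)).re = 0 := by
        simp [Complex.mul_re]
      rw [this, Real.exp_zero, mul_one]
      exact hMy y
    · have htd := hstar N y 2 one_lt_two
      have hexptd : Filter.Tendsto (fun w : ℂ => Complex.exp ((lN : ℂ) * w))
          (nhdsWithin ((y:ℂ) * Complex.I)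
            {w : ℂ | 0 < w.re ∧ ‖w - (y:ℂ)*Complex.I‖ < 2*w.re})
          (nhds (Complex.exp ((lN : ℂ) * ((y:ℂ)*Complex.I)))) := by
        have hc : Continuous (fun w : ℂ => Complex.exp ((lN : ℂ) * w)) := by fun_prop
        exact (hc.tendsto _).mono_left nhdsWithin_le_nhds
      exact htd.mul hexptd
  -- apply the maximum principle
  have hmax := halfplane_max g B M hM0 hgdiff hgB hbd z hz
  -- conclude
  have h2 : ‖F z‖ = ‖g z‖ * Real.exp (-(lN * z.re)) := by
    rw [hgabs, mul_assoc, ← Real.exp_add]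
    simp
  have hgoal : ‖F z‖ ≤ M * Real.exp (-lN * z.re) := by
    rw [h2, neg_mul]
    exact mul_le_mul_of_nonneg_right hmax (Real.exp_pos _).le
  exact hgoal
end

section
/- Let φ be a function on the unit polydisk 𝔻^N having a (formal) Taylor series ∑_{j} ∑_{|k|+|m|=j} a_{km} z^k z̄^m at the origin. Fix α ∈ ℝ^N with all components positive and c ∈ 𝔻^N, and define s_c(ζ) = (c₁ e^{-α₁ ζ}, …, c_N e^{-α_N ζ}). Let {λ_j} be the ascending enumeration of all values ⟨α,k⟩ + ⟨α,m⟩ over multi-indices k, m. Then the function f_c = φ ∘ s_c on the right half-plane has the asymptotic expansion ∑_{j=0}^∞ (∑_{⟨α,k⟩+⟨α,m⟩ = λ_j} a_{km} c^k c̄^m e^{-⟨α,k⟩ζ - ⟨α,m⟩ζ̄}). -/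
open Filter Complex

section Aux

lemma aux_prod_pow_exp {N : ℕ} (α : Fin N → ℝ) (c : Fin N → ℂ) (k : Fin N → ℕ) (ζ : ℂ) :
    (∏ i, (c i * Complex.exp (-(α i : ℂ) * ζ)) ^ k i)
      = (∏ i, c i ^ k i) * Complex.exp (-((∑ i, α i * k i : ℝ) : ℂ) * ζ) := by
  simp_rw [mul_pow, Finset.prod_mul_distrib, ← Complex.exp_nat_mul, ← Complex.exp_sum]
  congr 1
  push_cast
  rw [neg_mul, Finset.sum_mul, ← Finset.sum_neg_distrib]
  exact congrArg _ (Finset.sum_congr rfl fun i _ => by ring)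

lemma aux_prod_pow_exp_conj {N : ℕ} (α : Fin N → ℝ) (c : Fin N → ℂ) (m : Fin N → ℕ) (ζ : ℂ) :
    (∏ i, (starRingEnd ℂ (c i * Complex.exp (-(α i : ℂ) * ζ))) ^ m i)
      = (∏ i, (starRingEnd ℂ (c i)) ^ m i)
        * Complex.exp (-((∑ i, α i * m i : ℝ) : ℂ) * (starRingEnd ℂ ζ)) := by
  have h : ∀ i : Fin N, starRingEnd ℂ (c i * Complex.exp (-(α i : ℂ) * ζ))
      = starRingEnd ℂ (c i) * Complex.exp (-(α i : ℂ) * (starRingEnd ℂ ζ)) := by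
    intro i
    rw [map_mul, ← Complex.exp_conj]
    congr 1
    simp [map_mul]
  simp_rw [h]
  exact aux_prod_pow_exp α (fun i => starRingEnd ℂ (c i)) m (starRingEnd ℂ ζ)

lemma aux_term_eq {N : ℕ} (a : ℂ) (α : Fin N → ℝ) (c : Fin N → ℂ) (k m : Fin N → ℕ) (ζ : ℂ) :
    a * (∏ i, (c i * Complex.exp (-(α i : ℂ) * ζ)) ^ k i)
      * (∏ i, (starRingEnd ℂ (c i * Complex.exp (-(α i : ℂ) * ζ))) ^ m i)
    = a * (∏ i, c i ^ k i) * (∏ i, (starRingEnd ℂ (c i)) ^ m i) *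
        Complex.exp (-((∑ i, α i * k i : ℝ) : ℂ) * ζ -
          ((∑ i, α i * m i : ℝ) : ℂ) * (starRingEnd ℂ ζ)) := by
  rw [aux_prod_pow_exp, aux_prod_pow_exp_conj, sub_eq_add_neg, ← neg_mul, Complex.exp_add]
  ring

lemma aux_reindex {N p : ℕ} (v : (Fin N → ℕ) → (Fin N → ℕ) → ℂ) :
    (∑ j ∈ Finset.range (p+1),
      ∑ k ∈ Fintype.piFinset (fun _ : Fin N => Finset.range (j+1)),
        ∑ m ∈ Fintype.piFinset (fun _ : Fin N => Finset.range (j+1)),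
          (if (∑ i, k i) + (∑ i, m i) = j then v k m else 0))
    = ∑ km ∈ ((Fintype.piFinset (fun _ : Fin N => Finset.range (p+1))) ×ˢ
              (Fintype.piFinset (fun _ : Fin N => Finset.range (p+1)))).filter
              (fun km => (∑ i, km.1 i) + (∑ i, km.2 i) ≤ p), v km.1 km.2 := by
  have hfib := Finset.sum_fiberwise_of_maps_to
    (s := ((Fintype.piFinset (fun _ : Fin N => Finset.range (p+1))) ×ˢ
              (Fintype.piFinset (fun _ : Fin N => Finset.range (p+1)))).filter
              (fun km => (∑ i, km.1 i) + (∑ i, km.2 i) ≤ p))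
    (g := fun km => (∑ i, km.1 i) + (∑ i, km.2 i))
    (t := Finset.range (p+1)) (fun km hkm => by
      simp only [Finset.mem_filter] at hkm
      exact Finset.mem_range.mpr (Nat.lt_succ_of_le hkm.2)) (fun km => v km.1 km.2)
  rw [← hfib]
  refine Finset.sum_congr rfl fun j hj => ?_
  have hjp : j ≤ p := Nat.lt_succ_iff.mp (Finset.mem_range.mp hj)
  rw [Finset.filter_filter]
  have hset : ((Fintype.piFinset (fun _ : Fin N => Finset.range (j+1))) ×ˢ
      (Fintype.piFinset (fun _ : Fin N => Finset.range (j+1)))).filter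
        (fun km => (∑ i, km.1 i) + (∑ i, km.2 i) = j)
      = ((Fintype.piFinset (fun _ : Fin N => Finset.range (p+1))) ×ˢ
      (Fintype.piFinset (fun _ : Fin N => Finset.range (p+1)))).filter
        (fun km => ((∑ i, km.1 i) + (∑ i, km.2 i) ≤ p) ∧ (∑ i, km.1 i) + (∑ i, km.2 i) = j) := by
    ext km
    have h1 : ∀ i, km.1 i ≤ ∑ i', km.1 i' :=
      fun i => Finset.single_le_sum (fun _ _ => Nat.zero_le _) (Finset.mem_univ i)
    have h2 : ∀ i, km.2 i ≤ ∑ i', km.2 i' :=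
      fun i => Finset.single_le_sum (fun _ _ => Nat.zero_le _) (Finset.mem_univ i)
    simp only [Finset.mem_filter, Finset.mem_product, Fintype.mem_piFinset, Finset.mem_range]
    constructor
    · rintro ⟨⟨hk, hm⟩, hd⟩
      exact ⟨⟨fun i => by have := h1 i; omega, fun i => by have := h2 i; omega⟩, by omega, hd⟩
    · rintro ⟨_, _, hd⟩
      exact ⟨⟨fun i => by have := h1 i; omega, fun i => by have := h2 i; omega⟩, hd⟩
  rw [← hset, Finset.sum_filter, Finset.sum_product]

end Aux

/-- **Taylor series induce asymptotic expansions along exponential curves.**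
Let `φ` be a function on the unit polydisk `𝔻^N` with formal Taylor series
`∑ a k m z^k z̄^m` at the origin, `α ∈ ℝ^N` with positive components, `c ∈ 𝔻^N`, and
`s_c(ζ) = (c₁ e^{-α₁ ζ}, …, c_N e^{-α_N ζ})`. If `lam` is the ascending enumeration of
all values `⟨α,k⟩ + ⟨α,m⟩`, then `f_c = φ ∘ s_c` has the asymptotic expansion
`∑_j (∑_{⟨α,k⟩+⟨α,m⟩ = lam j} a k m c^k c̄^m e^{-⟨α,k⟩ζ - ⟨α,m⟩ζ̄})` on the right
half-plane; equivalently, for each `n` the sum of the terms of level `≤ lam n`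
approximates `f_c` to order `o(e^{-lam n · Re ζ})`. -/
theorem stmt_9 (N : ℕ) (φ : (Fin N → ℂ) → ℂ)
    (a : (Fin N → ℕ) → (Fin N → ℕ) → ℂ) (α : Fin N → ℝ) (c : Fin N → ℂ)
    (hα : ∀ i, 0 < α i) (hc : ∀ i, ‖c i‖ < 1)
    (hTaylor : ∀ n : ℕ,
      (fun z : Fin N → ℂ => φ z -
          ∑ j ∈ Finset.range (n + 1),
            ∑ k ∈ Fintype.piFinset (fun _ : Fin N => Finset.range (j + 1)),
              ∑ m ∈ Fintype.piFinset (fun _ : Fin N => Finset.range (j + 1)),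
                if (∑ i, k i) + (∑ i, m i) = j then
                  a k m * (∏ i, z i ^ k i) * (∏ i, (starRingEnd ℂ (z i)) ^ m i)
                else 0)
        =o[nhds (0 : Fin N → ℂ)] fun z => ‖z‖ ^ n)
    (lam : ℕ → ℝ) (hmono : StrictMono lam)
    (hlam₁ : ∀ j : ℕ, ∃ k m : Fin N → ℕ,
      lam j = (∑ i, α i * k i) + (∑ i, α i * m i))
    (hlam₂ : ∀ k m : Fin N → ℕ, ∃ j : ℕ,
      lam j = (∑ i, α i * k i) + (∑ i, α i * m i)) :
    ∀ n : ℕ, ∀ K : Finset ((Fin N → ℕ) × (Fin N → ℕ)),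
      (∀ km : (Fin N → ℕ) × (Fin N → ℕ), km ∈ K ↔
        (∑ i, α i * km.1 i) + (∑ i, α i * km.2 i) ≤ lam n) →
      Filter.Tendsto
        (fun ζ : ℂ => ‖
            (φ (fun i => c i * Complex.exp (-(α i : ℂ) * ζ)) -
              ∑ km ∈ K,
                a km.1 km.2 * (∏ i, c i ^ km.1 i) * (∏ i, (starRingEnd ℂ (c i)) ^ km.2 i) *
                  Complex.exp (-((∑ i, α i * km.1 i : ℝ) : ℂ) * ζ -
                    ((∑ i, α i * km.2 i : ℝ) : ℂ) * (starRingEnd ℂ ζ)))‖ *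
          Real.exp (lam n * ζ.re))
        (Filter.comap Complex.re Filter.atTop) (nhds 0) := by
  intro n K hK
  set F := Filter.comap Complex.re Filter.atTop with hF
  have hre : Tendsto Complex.re F atTop := tendsto_comap
  have hexp_decay : ∀ b : ℝ, b < 0 →
      Tendsto (fun ζ : ℂ => Real.exp (b * ζ.re)) F (nhds 0) :=
    fun b hb => Real.tendsto_exp_atBot.comp (hre.const_mul_atTop_of_neg hb)
  obtain ⟨ε, hε, hεα⟩ : ∃ ε : ℝ, 0 < ε ∧ ∀ i, ε ≤ α i := by
    rcases isEmpty_or_nonempty (Fin N) with h | h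
    · exact ⟨1, one_pos, fun i => isEmptyElim i⟩
    · refine ⟨Finset.univ.inf' Finset.univ_nonempty α, ?_,
        fun i => Finset.inf'_le α (Finset.mem_univ i)⟩
      exact (Finset.lt_inf'_iff _).mpr (fun i _ => hα i)
  have hlamn : 0 ≤ lam n := by
    obtain ⟨k, m, hkm⟩ := hlam₁ n
    rw [hkm]
    have : ∀ (k : Fin N → ℕ), 0 ≤ ∑ i, α i * k i :=
      fun k => Finset.sum_nonneg fun i _ => mul_nonneg (hα i).le (Nat.cast_nonneg _)
    linarith [this k, this m]
  obtain ⟨p, hp⟩ : ∃ p : ℕ, lam n < p * ε := by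
    obtain ⟨p, hp⟩ := exists_nat_gt (lam n / ε)
    exact ⟨p, by rwa [div_lt_iff₀ hε] at hp⟩
  -- level lower bound
  have hlev_ge : ∀ km : (Fin N → ℕ) × (Fin N → ℕ),
      ε * ((∑ i, km.1 i) + (∑ i, km.2 i) : ℕ) ≤
        (∑ i, α i * km.1 i) + (∑ i, α i * km.2 i) := by
    intro km
    have h1 : ∀ (k : Fin N → ℕ), ε * (∑ i, k i : ℕ) ≤ ∑ i, α i * k i := by
      intro k
      push_cast
      rw [Finset.mul_sum]
      exact Finset.sum_le_sum fun i _ =>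
        mul_le_mul_of_nonneg_right (hεα i) (Nat.cast_nonneg _)
    push_cast
    push_cast at h1
    calc ε * ((∑ i, (km.1 i : ℝ)) + ∑ i, (km.2 i : ℝ))
        = ε * (∑ i, (km.1 i : ℝ)) + ε * (∑ i, (km.2 i : ℝ)) := by ring
      _ ≤ _ := add_le_add (h1 km.1) (h1 km.2)
  have hdegK : ∀ km ∈ K, (∑ i, km.1 i) + (∑ i, km.2 i) ≤ p := by
    intro km hkm
    have hl := (hK km).mp hkm
    have := hlev_ge km
    have hlt : (((∑ i, km.1 i) + (∑ i, km.2 i) : ℕ) : ℝ) < p := by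
      rw [← mul_lt_mul_iff_right₀ hε]
      calc ε * (((∑ i, km.1 i) + (∑ i, km.2 i) : ℕ) : ℝ) ≤ lam n := le_trans this hl
        _ < p * ε := hp
        _ = ε * p := by ring
    exact_mod_cast hlt.le
  -- the big index set
  set P : Finset ((Fin N → ℕ) × (Fin N → ℕ)) :=
    ((Fintype.piFinset (fun _ : Fin N => Finset.range (p+1))) ×ˢ
     (Fintype.piFinset (fun _ : Fin N => Finset.range (p+1)))).filter
     (fun km => (∑ i, km.1 i) + (∑ i, km.2 i) ≤ p) with hP
  have hKP : K ⊆ P := by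
    intro km hkm
    have hdeg := hdegK km hkm
    have h1 : ∀ i, km.1 i ≤ ∑ i', km.1 i' :=
      fun i => Finset.single_le_sum (fun _ _ => Nat.zero_le _) (Finset.mem_univ i)
    have h2 : ∀ i, km.2 i ≤ ∑ i', km.2 i' :=
      fun i => Finset.single_le_sum (fun _ _ => Nat.zero_le _) (Finset.mem_univ i)
    rw [hP]
    simp only [Finset.mem_filter, Finset.mem_product, Fintype.mem_piFinset, Finset.mem_range]
    exact ⟨⟨fun i => by have := h1 i; omega, fun i => by have := h2 i; omega⟩, hdeg⟩
  -- split identity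
  have hsplit : ∀ ζ : ℂ,
      (φ (fun i => c i * Complex.exp (-(α i : ℂ) * ζ)) -
        ∑ km ∈ K,
          a km.1 km.2 * (∏ i, c i ^ km.1 i) * (∏ i, (starRingEnd ℂ (c i)) ^ km.2 i) *
            Complex.exp (-((∑ i, α i * km.1 i : ℝ) : ℂ) * ζ -
              ((∑ i, α i * km.2 i : ℝ) : ℂ) * (starRingEnd ℂ ζ)))
      = (φ (fun i => c i * Complex.exp (-(α i : ℂ) * ζ)) -
          ∑ j ∈ Finset.range (p + 1),
            ∑ k ∈ Fintype.piFinset (fun _ : Fin N => Finset.range (j + 1)),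
              ∑ m ∈ Fintype.piFinset (fun _ : Fin N => Finset.range (j + 1)),
                if (∑ i, k i) + (∑ i, m i) = j then
                  a k m * (∏ i, (c i * Complex.exp (-(α i : ℂ) * ζ)) ^ k i) *
                    (∏ i, (starRingEnd ℂ (c i * Complex.exp (-(α i : ℂ) * ζ))) ^ m i)
                else 0)
        + ∑ km ∈ P \ K,
            a km.1 km.2 * (∏ i, c i ^ km.1 i) * (∏ i, (starRingEnd ℂ (c i)) ^ km.2 i) *
              Complex.exp (-((∑ i, α i * km.1 i : ℝ) : ℂ) * ζ -
                ((∑ i, α i * km.2 i : ℝ) : ℂ) * (starRingEnd ℂ ζ)) := by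
    intro ζ
    have hT : (∑ j ∈ Finset.range (p + 1),
        ∑ k ∈ Fintype.piFinset (fun _ : Fin N => Finset.range (j + 1)),
          ∑ m ∈ Fintype.piFinset (fun _ : Fin N => Finset.range (j + 1)),
            if (∑ i, k i) + (∑ i, m i) = j then
              a k m * (∏ i, (c i * Complex.exp (-(α i : ℂ) * ζ)) ^ k i) *
                (∏ i, (starRingEnd ℂ (c i * Complex.exp (-(α i : ℂ) * ζ))) ^ m i)
            else 0)
        = ∑ km ∈ P,
            a km.1 km.2 * (∏ i, c i ^ km.1 i) * (∏ i, (starRingEnd ℂ (c i)) ^ km.2 i) *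
              Complex.exp (-((∑ i, α i * km.1 i : ℝ) : ℂ) * ζ -
                ((∑ i, α i * km.2 i : ℝ) : ℂ) * (starRingEnd ℂ ζ)) := by
      rw [aux_reindex (fun k m => a k m * (∏ i, (c i * Complex.exp (-(α i : ℂ) * ζ)) ^ k i) *
        (∏ i, (starRingEnd ℂ (c i * Complex.exp (-(α i : ℂ) * ζ))) ^ m i))]
      exact Finset.sum_congr rfl fun km _ => aux_term_eq (a km.1 km.2) α c km.1 km.2 ζ
    rw [hT, ← Finset.sum_sdiff hKP]
    ring
  -- s_c tends to 0
  have hs0 : Tendsto (fun ζ : ℂ => (fun i => c i * Complex.exp (-(α i : ℂ) * ζ)))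
      F (nhds (0 : Fin N → ℂ)) := by
    rw [tendsto_pi_nhds]
    intro i
    have h0 : (0 : Fin N → ℂ) i = 0 := rfl
    rw [h0, tendsto_zero_iff_norm_tendsto_zero]
    have heq : (fun ζ : ℂ => ‖c i * Complex.exp (-(α i : ℂ) * ζ)‖)
        = fun ζ : ℂ => ‖c i‖ * Real.exp (-(α i) * ζ.re) := by
      funext ζ
      rw [norm_mul, Complex.norm_exp]
      congr 2
      simp
    rw [heq]
    simpa using (hexp_decay (-(α i)) (neg_lt_zero.mpr (hα i))).const_mul ‖c i‖
  -- uniform norm bound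
  have hnormb : ∀ᶠ ζ : ℂ in F,
      ‖(fun i => c i * Complex.exp (-(α i : ℂ) * ζ))‖ ≤ Real.exp (-ε * ζ.re) := by
    filter_upwards [hre.eventually_ge_atTop 0] with ζ hζ
    rw [pi_norm_le_iff_of_nonneg (Real.exp_pos _).le]
    intro i
    rw [norm_mul, Complex.norm_exp]
    have h1 : (-(α i : ℂ) * ζ).re = -(α i) * ζ.re := by simp
    rw [h1]
    calc ‖c i‖ * Real.exp (-(α i) * ζ.re)
        ≤ 1 * Real.exp (-ε * ζ.re) := by
          apply mul_le_mul
          · exact (hc i).le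
          · exact Real.exp_le_exp.mpr (by nlinarith [hεα i])
          · exact (Real.exp_pos _).le
          · exact zero_le_one
      _ = Real.exp (-ε * ζ.re) := one_mul _
  -- the comparison function tends to zero
  have hpw : Tendsto (fun ζ : ℂ =>
      ‖(fun i => c i * Complex.exp (-(α i : ℂ) * ζ))‖ ^ p * Real.exp (lam n * ζ.re))
      F (nhds 0) := by
    refine squeeze_zero' (Eventually.of_forall fun ζ => by positivity) ?_
      (hexp_decay (lam n - p * ε) (by linarith))
    filter_upwards [hnormb] with ζ h1
    calc ‖(fun i => c i * Complex.exp (-(α i : ℂ) * ζ))‖ ^ p * Real.exp (lam n * ζ.re)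
        ≤ Real.exp (-ε * ζ.re) ^ p * Real.exp (lam n * ζ.re) := by
          gcongr
      _ = Real.exp ((lam n - p * ε) * ζ.re) := by
          rw [← Real.exp_nat_mul, ← Real.exp_add]
          congr 1
          ring
  -- remainder term
  have h1 : Tendsto (fun ζ : ℂ =>
      (φ (fun i => c i * Complex.exp (-(α i : ℂ) * ζ)) -
          ∑ j ∈ Finset.range (p + 1),
            ∑ k ∈ Fintype.piFinset (fun _ : Fin N => Finset.range (j + 1)),
              ∑ m ∈ Fintype.piFinset (fun _ : Fin N => Finset.range (j + 1)),
                if (∑ i, k i) + (∑ i, m i) = j then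
                  a k m * (∏ i, (c i * Complex.exp (-(α i : ℂ) * ζ)) ^ k i) *
                    (∏ i, (starRingEnd ℂ (c i * Complex.exp (-(α i : ℂ) * ζ))) ^ m i)
                else 0) * ((Real.exp (lam n * ζ.re) : ℝ) : ℂ)) F (nhds 0) := by
    have hlitt := (hTaylor p).comp_tendsto hs0
    have hcoe : (fun ζ : ℂ => ((Real.exp (lam n * ζ.re) : ℝ) : ℂ)) =O[F]
        fun ζ : ℂ => Real.exp (lam n * ζ.re) :=
      Asymptotics.isBigO_of_le F fun ζ => by rw [Complex.norm_real]
    have hO := hlitt.isBigO.mul hcoe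
    exact (hO.trans_tendsto hpw).congr fun ζ => rfl
  -- extra terms
  have h2 : ∀ km ∈ P \ K, Tendsto (fun ζ : ℂ =>
      (a km.1 km.2 * (∏ i, c i ^ km.1 i) * (∏ i, (starRingEnd ℂ (c i)) ^ km.2 i) *
        Complex.exp (-((∑ i, α i * km.1 i : ℝ) : ℂ) * ζ -
          ((∑ i, α i * km.2 i : ℝ) : ℂ) * (starRingEnd ℂ ζ))) *
        ((Real.exp (lam n * ζ.re) : ℝ) : ℂ)) F (nhds 0) := by
    intro km hkm
    have hlev : lam n < (∑ i, α i * km.1 i) + (∑ i, α i * km.2 i) :=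
      lt_of_not_ge fun h => (Finset.mem_sdiff.mp hkm).2 ((hK km).mpr h)
    rw [tendsto_zero_iff_norm_tendsto_zero]
    have heq : (fun ζ : ℂ => ‖(a km.1 km.2 * (∏ i, c i ^ km.1 i) *
        (∏ i, (starRingEnd ℂ (c i)) ^ km.2 i) *
        Complex.exp (-((∑ i, α i * km.1 i : ℝ) : ℂ) * ζ -
          ((∑ i, α i * km.2 i : ℝ) : ℂ) * (starRingEnd ℂ ζ))) *
        ((Real.exp (lam n * ζ.re) : ℝ) : ℂ)‖)
        = fun ζ : ℂ => ‖(a km.1 km.2 * (∏ i, c i ^ km.1 i) *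
            (∏ i, (starRingEnd ℂ (c i)) ^ km.2 i))‖ *
          Real.exp ((lam n - ((∑ i, α i * km.1 i) + (∑ i, α i * km.2 i))) * ζ.re) := by
      funext ζ
      rw [norm_mul, norm_mul, Complex.norm_exp, Complex.norm_real, Real.norm_eq_abs,
        abs_of_pos (Real.exp_pos _)]
      have hre2 : (-((∑ i, α i * km.1 i : ℝ) : ℂ) * ζ -
          ((∑ i, α i * km.2 i : ℝ) : ℂ) * (starRingEnd ℂ ζ)).re
          = -(((∑ i, α i * km.1 i) + (∑ i, α i * km.2 i)) * ζ.re) := by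
        simp [Complex.sub_re, Complex.mul_re]
        ring
      rw [hre2, mul_assoc, ← Real.exp_add]
      congr 2
      ring
    rw [heq]
    simpa using (hexp_decay (lam n - ((∑ i, α i * km.1 i) + (∑ i, α i * km.2 i)))
      (by linarith)).const_mul ‖(a km.1 km.2 * (∏ i, c i ^ km.1 i) *
        (∏ i, (starRingEnd ℂ (c i)) ^ km.2 i))‖
  -- combine
  have hC : Tendsto (fun ζ : ℂ =>
      (φ (fun i => c i * Complex.exp (-(α i : ℂ) * ζ)) -
        ∑ km ∈ K,
          a km.1 km.2 * (∏ i, c i ^ km.1 i) * (∏ i, (starRingEnd ℂ (c i)) ^ km.2 i) *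
            Complex.exp (-((∑ i, α i * km.1 i : ℝ) : ℂ) * ζ -
              ((∑ i, α i * km.2 i : ℝ) : ℂ) * (starRingEnd ℂ ζ))) *
        ((Real.exp (lam n * ζ.re) : ℝ) : ℂ)) F (nhds 0) := by
    have hsum := tendsto_finset_sum (P \ K) h2
    have hadd := h1.add hsum
    simp only [add_zero, Finset.sum_const_zero] at hadd
    refine Tendsto.congr ?_ hadd
    intro ζ
    rw [hsplit ζ, add_mul, Finset.sum_mul]
  have := tendsto_zero_iff_norm_tendsto_zero.mp hC
  refine this.congr fun ζ => ?_
  rw [norm_mul, Complex.norm_real, Real.norm_eq_abs,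
    abs_of_pos (Real.exp_pos _)]
end

section
/- For the vector field F(z₁,z₂) = (z₁, -z₂) on ℂ², the function φ(z₁, z₂) = conj(z₁)·conj(z₂) is real-analytic, constant on every integral curve of F (hence F-holomorphic), has a Taylor series at the origin, but that Taylor series is anti-holomorphic and φ is not holomorphic. -/
open Complex Asymptotics

private noncomputable def A18 : ℕ → ℕ → ℕ → ℕ → ℂ := fun k₁ k₂ m₁ m₂ =>
  if k₁ = 0 ∧ k₂ = 0 ∧ m₁ = 1 ∧ m₂ = 1 then 1 else 0

private lemma conj_not_diff (z : ℂ) : ¬ DifferentiableAt ℂ (starRingEnd ℂ) z := by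
  intro h
  have hC : HasFDerivAt (starRingEnd ℂ)
      ((fderiv ℂ (starRingEnd ℂ) z).restrictScalars ℝ) z :=
    (h.hasFDerivAt).restrictScalars ℝ
  have hR : HasFDerivAt (starRingEnd ℂ)
      (Complex.conjCLE.toContinuousLinearMap : ℂ →L[ℝ] ℂ) z :=
    Complex.conjCLE.toContinuousLinearMap.hasFDerivAt
  have heq := hC.unique hR
  have h1 : (fderiv ℂ (starRingEnd ℂ) z) 1 = (1 : ℂ) := by
    have := congrFun (congrArg DFunLike.coe heq) 1
    simpa using this
  have hI : (fderiv ℂ (starRingEnd ℂ) z) I = -I := by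
    have := congrFun (congrArg DFunLike.coe heq) I
    simpa using this
  have : (fderiv ℂ (starRingEnd ℂ) z) I = I := by
    have := (fderiv ℂ (starRingEnd ℂ) z).map_smul I (1 : ℂ)
    simpa [h1] using this
  rw [this] at hI
  exact I_ne_zero (by linear_combination hI / 2)

private lemma sum_eq (n : ℕ) (hn : 2 ≤ n) (p : ℂ × ℂ) :
    (∑ k₁ ∈ Finset.range (n + 1), ∑ k₂ ∈ Finset.range (n + 1),
        ∑ m₁ ∈ Finset.range (n + 1), ∑ m₂ ∈ Finset.range (n + 1),
          if k₁ + k₂ + m₁ + m₂ ≤ n then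
            A18 k₁ k₂ m₁ m₂ * p.1 ^ k₁ * p.2 ^ k₂ *
              (starRingEnd ℂ p.1) ^ m₁ * (starRingEnd ℂ p.2) ^ m₂
          else 0)
      = (starRingEnd ℂ p.1) * (starRingEnd ℂ p.2) := by
  rw [Finset.sum_eq_single_of_mem 0 (Finset.mem_range.mpr (by omega))
    (fun b _ hb => by simp [A18, hb])]
  rw [Finset.sum_eq_single_of_mem 0 (Finset.mem_range.mpr (by omega))
    (fun b _ hb => by simp [A18, hb])]
  rw [Finset.sum_eq_single_of_mem 1 (Finset.mem_range.mpr (by omega))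
    (fun b _ hb => by simp [A18, hb])]
  rw [Finset.sum_eq_single_of_mem 1 (Finset.mem_range.mpr (by omega))
    (fun b _ hb => by simp [A18, hb])]
  simp [A18, hn]

private lemma lo (n : ℕ) (hn : n < 2) :
    (fun p : ℂ × ℂ => (starRingEnd ℂ p.1) * (starRingEnd ℂ p.2)) =o[nhds 0]
      fun p => ‖p‖ ^ n := by
  have h1 : (fun p : ℂ × ℂ => (starRingEnd ℂ p.1) * (starRingEnd ℂ p.2)) =O[nhds 0]
      fun p => ‖p‖ ^ 2 := by
    apply IsBigO.of_bound 1
    filter_upwards with p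
    have : ‖(starRingEnd ℂ p.1) * (starRingEnd ℂ p.2)‖ = ‖p.1‖ * ‖p.2‖ := by
      simp [RCLike.norm_conj]
    rw [this]
    have := mul_le_mul (norm_fst_le p) (norm_snd_le p) (norm_nonneg _) (norm_nonneg _)
    simpa [pow_two, _root_.abs_of_nonneg (norm_nonneg p)] using this
  exact h1.trans_isLittleO (isLittleO_norm_pow_norm_pow hn)

/-- **Counterexample: opposite eigenvalues.** For the vector field
`F(z₁,z₂) = (z₁, -z₂)` on `ℂ²`, the function `φ(z₁,z₂) = conj z₁ · conj z₂` is
real-analytic, constant on every integral curve `ζ ↦ (c₁ e^ζ, c₂ e^{-ζ})` of `F`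
(hence `F`-holomorphic), has a Taylor series at the origin, but that Taylor series is
anti-holomorphic (all coefficients of terms containing a holomorphic variable vanish)
and `φ` is not holomorphic on any nonempty open set. -/
theorem stmt_18 (φ : ℂ × ℂ → ℂ)
    (hφ : φ = fun p : ℂ × ℂ => (starRingEnd ℂ p.1) * (starRingEnd ℂ p.2)) :
    AnalyticOn ℝ φ Set.univ ∧
    (∀ (c₁ c₂ : ℂ) (ζ : ℂ),
      φ (c₁ * Complex.exp ζ, c₂ * Complex.exp (-ζ)) = φ (c₁, c₂)) ∧
    (∃ a : ℕ → ℕ → ℕ → ℕ → ℂ,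
      (∀ n : ℕ,
        (fun p : ℂ × ℂ => φ p -
            ∑ k₁ ∈ Finset.range (n + 1), ∑ k₂ ∈ Finset.range (n + 1),
              ∑ m₁ ∈ Finset.range (n + 1), ∑ m₂ ∈ Finset.range (n + 1),
                if k₁ + k₂ + m₁ + m₂ ≤ n then
                  a k₁ k₂ m₁ m₂ * p.1 ^ k₁ * p.2 ^ k₂ *
                    (starRingEnd ℂ p.1) ^ m₁ * (starRingEnd ℂ p.2) ^ m₂
                else 0)
          =o[nhds (0 : ℂ × ℂ)] fun p => ‖p‖ ^ n) ∧
      (∀ k₁ k₂ m₁ m₂ : ℕ, a k₁ k₂ m₁ m₂ ≠ 0 → k₁ = 0 ∧ k₂ = 0)) ∧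
    (∀ U : Set (ℂ × ℂ), IsOpen U → U.Nonempty → ¬ DifferentiableOn ℂ φ U) := by
  subst hφ
  refine ⟨?_, ?_, ?_, ?_⟩
  · -- real-analytic
    have h1 : AnalyticOnNhd ℝ (fun p : ℂ × ℂ => (starRingEnd ℂ p.1)) Set.univ := by
      intro x _
      exact (Complex.conjCLE.toContinuousLinearMap.comp
        (ContinuousLinearMap.fst ℝ ℂ ℂ)).analyticAt x
    have h2 : AnalyticOnNhd ℝ (fun p : ℂ × ℂ => (starRingEnd ℂ p.2)) Set.univ := by
      intro x _
      exact (Complex.conjCLE.toContinuousLinearMap.comp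
        (ContinuousLinearMap.snd ℝ ℂ ℂ)).analyticAt x
    exact (h1.mul h2).analyticOn
  · -- constant on integral curves
    intro c₁ c₂ ζ
    simp only [map_mul]
    have : (starRingEnd ℂ) (Complex.exp ζ) * (starRingEnd ℂ) (Complex.exp (-ζ)) = 1 := by
      rw [← map_mul, ← Complex.exp_add, add_neg_cancel, Complex.exp_zero, map_one]
    calc (starRingEnd ℂ) c₁ * (starRingEnd ℂ) (Complex.exp ζ) *
          ((starRingEnd ℂ) c₂ * (starRingEnd ℂ) (Complex.exp (-ζ)))
        = (starRingEnd ℂ) c₁ * (starRingEnd ℂ) c₂ *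
          ((starRingEnd ℂ) (Complex.exp ζ) * (starRingEnd ℂ) (Complex.exp (-ζ))) := by ring
      _ = (starRingEnd ℂ) c₁ * (starRingEnd ℂ) c₂ := by rw [this, mul_one]
  · -- Taylor series
    refine ⟨A18, fun n => ?_, fun k₁ k₂ m₁ m₂ h => ?_⟩
    · rcases lt_or_ge n 2 with hn | hn
      · have hz : (fun p : ℂ × ℂ => (starRingEnd ℂ p.1) * (starRingEnd ℂ p.2) -
            ∑ k₁ ∈ Finset.range (n + 1), ∑ k₂ ∈ Finset.range (n + 1),
              ∑ m₁ ∈ Finset.range (n + 1), ∑ m₂ ∈ Finset.range (n + 1),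
                if k₁ + k₂ + m₁ + m₂ ≤ n then
                  A18 k₁ k₂ m₁ m₂ * p.1 ^ k₁ * p.2 ^ k₂ *
                    (starRingEnd ℂ p.1) ^ m₁ * (starRingEnd ℂ p.2) ^ m₂
                else 0)
            = fun p : ℂ × ℂ => (starRingEnd ℂ p.1) * (starRingEnd ℂ p.2) := by
          funext p
          interval_cases n <;> simp [A18, Finset.sum_range_succ]
        rw [hz]
        exact lo n hn
      · have hz : (fun p : ℂ × ℂ => (starRingEnd ℂ p.1) * (starRingEnd ℂ p.2) -
            ∑ k₁ ∈ Finset.range (n + 1), ∑ k₂ ∈ Finset.range (n + 1),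
              ∑ m₁ ∈ Finset.range (n + 1), ∑ m₂ ∈ Finset.range (n + 1),
                if k₁ + k₂ + m₁ + m₂ ≤ n then
                  A18 k₁ k₂ m₁ m₂ * p.1 ^ k₁ * p.2 ^ k₂ *
                    (starRingEnd ℂ p.1) ^ m₁ * (starRingEnd ℂ p.2) ^ m₂
                else 0)
            = fun _ : ℂ × ℂ => (0 : ℂ) := by
          funext p
          rw [sum_eq n hn p, sub_self]
        rw [hz]
        exact isLittleO_zero _ _
    · by_cases hc : k₁ = 0 ∧ k₂ = 0 ∧ m₁ = 1 ∧ m₂ = 1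
      · exact ⟨hc.1, hc.2.1⟩
      · simp [A18, hc] at h
  · -- not holomorphic
    intro U hU ⟨p, hp⟩ hd
    obtain ⟨q, hq, hq2⟩ : ∃ q : ℂ × ℂ, q ∈ U ∧ q.2 ≠ 0 := by
      by_cases h2 : p.2 = 0
      · obtain ⟨ε, hε, hball⟩ := Metric.isOpen_iff.mp hU p hp
        refine ⟨(p.1, p.2 + ε / 2), hball ?_, by show p.2 + (ε:ℂ)/2 ≠ 0; rw [h2, zero_add]; exact div_ne_zero (by exact_mod_cast hε.ne') two_ne_zero⟩
        rw [Metric.mem_ball]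
        have : dist (p.1, p.2 + ε / 2) p = ε / 2 := by
          simp [Prod.dist_eq, Complex.dist_eq, map_div₀, Complex.norm_real,
            _root_.abs_of_pos hε]
          positivity
        rw [this]; linarith
      · exact ⟨p, hp, h2⟩
    have hdq : DifferentiableAt ℂ (fun p : ℂ × ℂ => (starRingEnd ℂ p.1) * (starRingEnd ℂ p.2)) q :=
      hd.differentiableAt (hU.mem_nhds hq)
    have hline : DifferentiableAt ℂ (fun z : ℂ => (z, q.2)) q.1 :=
      (differentiableAt_id.prodMk (differentiableAt_const _))
    have hcomp : DifferentiableAt ℂ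
        (fun z : ℂ => (starRingEnd ℂ z) * (starRingEnd ℂ q.2)) q.1 := by
      have := hdq.comp q.1 hline
      exact this
    have : DifferentiableAt ℂ (starRingEnd ℂ) q.1 := by
      have h2 : (starRingEnd ℂ q.2) ≠ 0 := by
        simpa using hq2
      have := hcomp.mul_const ((starRingEnd ℂ q.2)⁻¹)
      have heq : (fun z : ℂ => (starRingEnd ℂ z) * (starRingEnd ℂ q.2) * (starRingEnd ℂ q.2)⁻¹)
          = (starRingEnd ℂ) := by
        funext z; field_simp
      rwa [heq] at this
    exact conj_not_diff q.1 this
end
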